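/- arXiv:1209.5451 — 5 statements merged into one kernel-verified Lean document; each statement's English description precedes it below -/
import Mathlib

section
/- An ℵ₀-arc connected Hausdorff space contains no simple triod: there is no subspace that is the union of three arcs meeting pairwise exactly in a common endpoint. -/
open Set Topology

/-- The points `0` and `1` of the unit interval `[0,1]`. -/
def i0 : Set.Icc (0:ℝ) 1 := ⟨0, by norm_num⟩
def i1 : Set.Icc (0:ℝ) 1 := ⟨1, by norm_num⟩

/-- A subset `A` of a topological space `X` is an *arc* if, with the subspace
topology, it is homeomorphic to the closed unit interval `[0,1]`. -/
def IsArc {X : Type*} [TopologicalSpace X] (A : Set X) : Prop :=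
  Nonempty (A ≃ₜ Set.Icc (0:ℝ) 1)

/-- `X` is `n`-arc connected if any `n` points of `X` lie on a common arc. -/
def NArcConnected (X : Type*) [TopologicalSpace X] (n : ℕ) : Prop :=
  ∀ p : Fin n → X, ∃ A : Set X, IsArc A ∧ ∀ i, p i ∈ A

/-- `X` is `ℵ₀`-arc connected if every countable subset of `X` is contained in an arc. -/
def Aleph0ArcConnected (X : Type*) [TopologicalSpace X] : Prop :=
  ∀ S : Set X, S.Countable → ∃ A : Set X, IsArc A ∧ S ⊆ A

/-- An `ℵ₀`-arc connected Hausdorff space contains no simple triod. -/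
theorem aleph0_ac_no_triod {X : Type*} [TopologicalSpace X] [T2Space X]
    (h : Aleph0ArcConnected X) :
    ¬ ∃ (q : X) (L : Fin 3 → Set.Icc (0:ℝ) 1 → X),
        (∀ i, Topology.IsEmbedding (L i)) ∧ (∀ i, L i i0 = q) ∧
        (∀ i j, i ≠ j → Set.range (L i) ∩ Set.range (L j) = {q}) := by
  rintro ⟨q, L, hemb, hq0, hinter⟩
  obtain ⟨D, hDc, hDd⟩ := TopologicalSpace.exists_countable_dense (Set.Icc (0:ℝ) 1)
  obtain ⟨A, hArc, hSA⟩ := h (⋃ i, L i '' D) (Set.countable_iUnion fun i => hDc.image _)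
  obtain ⟨e⟩ := hArc
  have hAcomp : IsCompact A := by
    rw [isCompact_iff_compactSpace]
    exact e.symm.compactSpace
  have hsub : ∀ i, Set.range (L i) ⊆ A := by
    intro i
    have h1 : Set.range (L i) ⊆ closure (L i '' D) := by
      rw [← Set.image_univ, ← hDd.closure_eq]
      exact image_closure_subset_closure_image (hemb i).continuous
    have h2 : closure (L i '' D) ⊆ A := by
      have : closure (L i '' D) ⊆ closure A :=
        closure_mono ((Set.subset_iUnion (fun i => L i '' D) i).trans hSA)
      rwa [hAcomp.isClosed.closure_eq] at this
    exact h1.trans h2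
  have hqA : q ∈ A := by
    have := hsub 0 (Set.mem_range_self i0); rwa [hq0 0] at this
  -- maps into ℝ
  set g : Fin 3 → Set.Icc (0:ℝ) 1 → ℝ :=
    fun i t => (e ⟨L i t, hsub i (Set.mem_range_self t)⟩ : ℝ) with hg
  set q' : ℝ := (e ⟨q, hqA⟩ : ℝ) with hq'
  have hgc : ∀ i, Continuous (g i) := by
    intro i
    exact continuous_subtype_val.comp (e.continuous.comp
      ((hemb i).continuous.codRestrict fun t => hsub i (Set.mem_range_self t)))
  have hgq : ∀ i, g i i0 = q' := by
    intro i
    simp only [hg, hq']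
    congr 1
    exact congrArg e (Subtype.ext (hq0 i))
  have hginj : ∀ i s t, g i s = g i t → s = t := by
    intro i s t hst
    have := e.injective (Subtype.ext hst)
    exact (hemb i).injective (congrArg Subtype.val this)
  have hi01 : (i0 : Set.Icc (0:ℝ) 1) ≠ i1 := by
    intro hh
    have : (0:ℝ) = 1 := congrArg Subtype.val hh
    norm_num at this
  set p : Fin 3 → ℝ := fun i => g i i1 with hp
  have hpne : ∀ i, p i ≠ q' := by
    intro i hpq
    exact hi01 (hginj i i1 i0 (by rw [hgq i]; exact hpq)).symm
  have hC : ∀ i, IsPreconnected (Set.range (g i)) :=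
    fun i => (isConnected_range (hgc i)).isPreconnected
  have hOC : ∀ i, (Set.range (g i)).OrdConnected :=
    fun i => (hC i).ordConnected
  have hCint : ∀ i j, i ≠ j → ∀ x, x ∈ Set.range (g i) → x ∈ Set.range (g j) → x = q' := by
    intro i j hij x ⟨s, hs⟩ ⟨t, ht⟩
    have hLL : L i s = L j t := by
      have : e ⟨L i s, _⟩ = e ⟨L j t, _⟩ := Subtype.ext (hs.trans ht.symm)
      exact congrArg Subtype.val (e.injective this)
    have hm : L i s ∈ Set.range (L i) ∩ Set.range (L j) :=
      ⟨Set.mem_range_self _, hLL ▸ Set.mem_range_self _⟩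
    rw [hinter i j hij] at hm
    rw [← hs, hg, hq']
    exact congrArg (fun z => (e z : ℝ)) (Subtype.ext hm)
  -- pigeonhole on sides
  have hcard : Fintype.card Bool < Fintype.card (Fin 3) := by simp
  obtain ⟨i, j, hij, hside⟩ :=
    Fintype.exists_ne_map_eq_of_card_lt (fun i : Fin 3 => decide (p i < q')) hcard
  have hpiC : ∀ k, p k ∈ Set.range (g k) := fun k => Set.mem_range_self _
  have hqC : ∀ k, q' ∈ Set.range (g k) := fun k => ⟨i0, hgq k⟩
  by_cases hlt : p i < q'
  · have hltj : p j < q' := by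
      have := hside
      simp only [decide_eq_decide] at this
      exact this.mp hlt
    set m := max (p i) (p j) with hm
    have hmi : m ∈ Set.range (g i) :=
      (hOC i).out (hpiC i) (hqC i) ⟨le_max_left _ _, le_of_lt (max_lt hlt hltj)⟩
    have hmj : m ∈ Set.range (g j) :=
      (hOC j).out (hpiC j) (hqC j) ⟨le_max_right _ _, le_of_lt (max_lt hlt hltj)⟩
    exact absurd (hCint i j hij m hmi hmj) (ne_of_lt (max_lt hlt hltj))
  · have hgt : q' < p i := lt_of_le_of_ne (not_lt.mp hlt) (hpne i).symm
    have hltj : ¬ p j < q' := by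
      have := hside
      simp only [decide_eq_decide] at this
      exact fun hh => hlt (this.mpr hh)
    have hgtj : q' < p j := lt_of_le_of_ne (not_lt.mp hltj) (hpne j).symm
    set m := min (p i) (p j) with hm
    have hmi : m ∈ Set.range (g i) :=
      (hOC i).out (hqC i) (hpiC i) ⟨le_of_lt (lt_min hgt hgtj), min_le_left _ _⟩
    have hmj : m ∈ Set.range (g j) :=
      (hOC j).out (hqC j) (hpiC j) ⟨le_of_lt (lt_min hgt hgtj), min_le_right _ _⟩
    exact absurd (hCint i j hij m hmi hmj) (ne_of_gt (lt_min hgt hgtj))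
end

section
/- Every countable subset of the long ray is bounded above, and consequently the long ray is ℵ₀-arc connected. -/
open Set Topology

/-- The first uncountable ordinal `ω₁`, as the type of ordinals below `(ℵ₁).ord`. -/
def Omega1 : Type 1 := {o : Ordinal // o < (Cardinal.aleph 1).ord}

noncomputable instance : LinearOrder Omega1 := by unfold Omega1; infer_instance

/-- The long ray: the lexicographic product `ω₁ ×ₗ [0,1)` with the order topology. -/
def LongRay : Type 1 := Lex (Omega1 × (Set.Ico (0:ℝ) 1))

noncomputable instance : LinearOrder LongRay := by
  unfold LongRay; exact Prod.Lex.instLinearOrder _ _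

noncomputable instance longRayTop : TopologicalSpace LongRay := Preorder.topology LongRay

instance : OrderTopology LongRay := ⟨rfl⟩


-- ### tsum machinery

section ff
set_option linter.unusedSectionVars false
variable {T : Type*} [LinearOrder T] (g : T → ℕ) (hg : Function.Injective g)

noncomputable def wt (γ : T) : ℝ := (1/2 : ℝ) ^ (g γ)

lemma wt_pos (γ : T) : 0 < wt g γ := by unfold wt; positivity

lemma wt_summable (hg : Function.Injective g) : Summable (wt g) :=
  summable_geometric_two.comp_injective hg

noncomputable def ff (β : T) : ℝ := ∑' γ, if γ < β then wt g γ else 0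

lemma ffs_summable (hg : Function.Injective g) (β : T) :
    Summable (fun γ => if γ < β then wt g γ else 0) := by
  refine (wt_summable g hg).of_nonneg_of_le (fun γ => ?_) (fun γ => ?_)
  · split <;> [exact (wt_pos g γ).le; rfl]
  · split <;> [rfl; exact (wt_pos g γ).le]

lemma ff_nonneg (β : T) : 0 ≤ ff g β :=
  tsum_nonneg fun γ => by split <;> [exact (wt_pos g γ).le; rfl]

lemma ff_add_wt_le (hg : Function.Injective g) {β β' : T} (h : β < β') :
    ff g β + wt g β ≤ ff g β' := by
  have h1 : ff g β + wt g β
      = ∑' γ, ((if γ < β then wt g γ else 0) + (if γ = β then wt g γ else 0)) := by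
    rw [Summable.tsum_add (ffs_summable g hg β)]
    · rw [ff, tsum_eq_single β (fun b' hb' => if_neg hb'), if_pos rfl]
    · exact (wt_summable g hg).of_nonneg_of_le
        (fun γ => by split <;> [exact (wt_pos g γ).le; rfl])
        (fun γ => by split <;> [rfl; exact (wt_pos g γ).le])
  rw [h1]
  refine Summable.tsum_le_tsum (fun γ => ?_) ?_ (ffs_summable g hg β')
  · rcases lt_trichotomy γ β with h'|h'|h'
    · simp [h', h'.ne, h'.trans h]
    · subst h'; simp [h, lt_irrefl]
    · simp [not_lt.2 h'.le, h'.ne']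
      split <;> [exact (wt_pos g γ).le; rfl]
  · refine Summable.add (ffs_summable g hg β) ?_
    exact (wt_summable g hg).of_nonneg_of_le
        (fun γ => by split <;> [exact (wt_pos g γ).le; rfl])
        (fun γ => by split <;> [rfl; exact (wt_pos g γ).le])

lemma ff_strictMono (hg : Function.Injective g) : StrictMono (ff g) := fun β β' h =>
  lt_of_lt_of_le (by linarith [wt_pos g β]) (ff_add_wt_le g hg h)

lemma ff_bot (β : T) (hβ : ∀ γ, ¬ γ < β) : ff g β = 0 := by
  simp [ff, hβ]

lemma ff_limit_le (hg : Function.Injective g) {β : T} {y : ℝ} (hy0 : 0 ≤ y)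
    (hlim : ∀ γ, γ < β → ∃ δ, γ < δ ∧ δ < β)
    (hle : ∀ γ, γ < β → ff g γ ≤ y) : ff g β ≤ y := by
  refine le_of_forall_pos_le_add fun ε hε => ?_
  have hs := ffs_summable g hg β
  obtain ⟨s, hs'⟩ : ∃ s : Finset T, ff g β - ε < ∑ γ ∈ s, (if γ < β then wt g γ else 0) :=
    (hs.hasSum.eventually (Ioi_mem_nhds (by linarith : ff g β - ε < ff g β))).exists
  rw [← Finset.sum_filter] at hs'
  set s' := s.filter (· < β) with hs'def
  rcases s'.eq_empty_or_nonempty with he | hne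
  · rw [he, Finset.sum_empty] at hs'; linarith
  · set m := s'.max' hne with hm
    have hmβ : m < β := (Finset.mem_filter.1 (s'.max'_mem hne)).2
    obtain ⟨δ, hmδ, hδβ⟩ := hlim m hmβ
    have h2 : ∑ γ ∈ s', wt g γ ≤ ff g δ := by
      have h3 : ∑ γ ∈ s', wt g γ = ∑ γ ∈ s', (if γ < δ then wt g γ else 0) :=
        Finset.sum_congr rfl fun γ hγ =>
          (if_pos (lt_of_le_of_lt (s'.le_max' γ hγ) hmδ)).symm
      rw [h3]
      exact Summable.sum_le_tsum s' (fun γ _ => by split <;> [exact (wt_pos g γ).le; rfl])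
        (ffs_summable g hg δ)
    linarith [hle δ hδβ]

-- ### auxiliary

end ff

section LR
open Cardinal Ordinal

def ov (x : Omega1) : Ordinal := Subtype.val x

lemma omega1_lt_iff (a b : Omega1) : a < b ↔ ov a < ov b := Iff.rfl
lemma omega1_ext {a b : Omega1} (h : ov a = ov b) : a = b := Subtype.ext h

lemma longRay_le_iff (x y : LongRay) :
    x ≤ y ↔ ((ofLex x).1 < (ofLex y).1 ∨
      ((ofLex x).1 = (ofLex y).1 ∧ (ofLex x).2 ≤ (ofLex y).2)) :=
  Prod.Lex.le_iff

lemma longRay_lt_iff (x y : LongRay) :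
    x < y ↔ ((ofLex x).1 < (ofLex y).1 ∨
      ((ofLex x).1 = (ofLex y).1 ∧ (ofLex x).2 < (ofLex y).2)) :=
  Prod.Lex.lt_iff

def zeroI : Set.Ico (0:ℝ) 1 := ⟨0, le_refl 0, by norm_num⟩

lemma omega1_zero_lt : (0:Ordinal) < (Cardinal.aleph 1).ord :=
  Cardinal.lt_ord.mpr (by simpa using aleph0_lt_aleph_one.trans_le' aleph0_pos.le)

def mkR (o : Ordinal) (h : o < (Cardinal.aleph 1).ord) (t : Set.Ico (0:ℝ) 1) : LongRay :=
  toLex (⟨o, h⟩, t)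

noncomputable def botR : LongRay := mkR 0 omega1_zero_lt zeroI

lemma ov_mkR (o : Ordinal) (h : o < (Cardinal.aleph 1).ord) (t : Set.Ico (0:ℝ) 1) :
    ov (ofLex (mkR o h t)).1 = o := rfl

lemma snd_mkR (o : Ordinal) (h : o < (Cardinal.aleph 1).ord) (t : Set.Ico (0:ℝ) 1) :
    ((ofLex (mkR o h t)).2 : ℝ) = (t : ℝ) := rfl

lemma botR_le (x : LongRay) : botR ≤ x := by
  rw [longRay_le_iff]
  rcases eq_or_lt_of_le (zero_le (a := ov (ofLex x).1)) with h | h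
  · right
    refine ⟨omega1_ext h, ?_⟩
    exact Subtype.coe_le_coe.mp (by simpa [botR, mkR, zeroI] using (ofLex x).2.2.1)
  · left; exact h

end LR

section Phi
open Cardinal Ordinal

variable (α : Ordinal.{0}) (hα1 : α < (Cardinal.aleph 1).ord) (g : ↥(Set.Iic α) → ℕ)
  (hg : Function.Injective g)

noncomputable def Phi (x : LongRay) : ℝ :=
  ff g ⟨min (ov (ofLex x).1) α, Set.mem_Iic.mpr (min_le_right _ _)⟩ +
    ((ofLex x).2 : ℝ) * (ff g ⟨min (ov (ofLex x).1 + 1) α, Set.mem_Iic.mpr (min_le_right _ _)⟩ -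
      ff g ⟨min (ov (ofLex x).1) α, Set.mem_Iic.mpr (min_le_right _ _)⟩)

-- The top point
noncomputable def topR : LongRay := mkR α hα1 zeroI

lemma mem_icc_fst {x : LongRay} (hx : x ∈ Icc botR (topR α hα1)) : ov (ofLex x).1 ≤ α := by
  rcases (longRay_le_iff x (topR α hα1)).1 hx.2 with h | ⟨h, _⟩
  · exact le_of_lt h
  · exact le_of_eq (congrArg Subtype.val h)

lemma mem_icc_snd {x : LongRay} (hx : x ∈ Icc botR (topR α hα1))
    (h : ov (ofLex x).1 = α) : ((ofLex x).2 : ℝ) = 0 := by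
  rcases (longRay_le_iff x (topR α hα1)).1 hx.2 with h' | ⟨_, h'⟩
  · exact absurd h (ne_of_lt h')
  · have h2 : ((ofLex x).2 : ℝ) ≤ 0 := Subtype.coe_le_coe.mpr h'
    exact le_antisymm h2 (ofLex x).2.2.1

lemma snd_nonneg (x : LongRay) : (0:ℝ) ≤ ((ofLex x).2 : ℝ) := (ofLex x).2.2.1
lemma snd_lt_one (x : LongRay) : ((ofLex x).2 : ℝ) < 1 := (ofLex x).2.2.2

lemma Phi_topR : Phi α g (topR α hα1) = ff g ⟨α, le_refl α⟩ := by
  have h0 : ((ofLex (topR α hα1)).2 : ℝ) = 0 := rfl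
  have h1 : ov (ofLex (topR α hα1)).1 = α := rfl
  simp only [Phi, h0, h1, zero_mul, add_zero, min_self]

lemma Phi_botR : Phi α g botR = 0 := by
  have h0 : ((ofLex botR).2 : ℝ) = 0 := rfl
  have h1 : ov (ofLex botR).1 = 0 := rfl
  have h2 : ff g ⟨min 0 α, Set.mem_Iic.mpr (min_le_right _ _)⟩ = 0 := by
    apply ff_bot
    intro γ hγ
    have : γ.val < min 0 α := hγ
    exact absurd (lt_of_lt_of_le this (min_le_left _ _)) not_lt_zero
  simp only [Phi, h0, h1, zero_mul, add_zero, h2]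

end Phi

section Phi2
open Cardinal Ordinal

variable (α : Ordinal.{0}) (hα1 : α < (Cardinal.aleph 1).ord) (g : ↥(Set.Iic α) → ℕ)
  (hg : Function.Injective g)

include hg

lemma Phi_strictMonoOn {x y : LongRay} (hx : x ∈ Icc botR (topR α hα1))
    (hy : y ∈ Icc botR (topR α hα1)) (hxy : x < y) : Phi α g x < Phi α g y := by
  have hxα := mem_icc_fst α hα1 hx
  have hyα := mem_icc_fst α hα1 hy
  have hFm := (ff_strictMono g hg).monotone
  have ht0 := snd_nonneg x
  have ht1 := snd_lt_one x
  have hs0 := snd_nonneg y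
  have hs1 := snd_lt_one y
  rcases (longRay_lt_iff x y).1 hxy with h1 | ⟨h1, h2⟩
  · have huv : ov (ofLex x).1 < ov (ofLex y).1 := h1
    have hu : ov (ofLex x).1 < α := lt_of_lt_of_le huv hyα
    have hu1 : ov (ofLex x).1 + 1 ≤ α := by
      rw [Ordinal.add_one_eq_succ]; exact Order.succ_le_of_lt hu
    have e1 : (⟨min (ov (ofLex x).1) α, Set.mem_Iic.mpr (min_le_right _ _)⟩ : ↥(Set.Iic α))
        = ⟨ov (ofLex x).1, Set.mem_Iic.mpr hu.le⟩ := Subtype.ext (min_eq_left hu.le)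
    have e2 : (⟨min (ov (ofLex x).1 + 1) α, Set.mem_Iic.mpr (min_le_right _ _)⟩ : ↥(Set.Iic α))
        = ⟨ov (ofLex x).1 + 1, Set.mem_Iic.mpr hu1⟩ := Subtype.ext (min_eq_left hu1)
    have hab : ff g ⟨ov (ofLex x).1, Set.mem_Iic.mpr hu.le⟩
        < ff g ⟨ov (ofLex x).1 + 1, Set.mem_Iic.mpr hu1⟩ := by
      refine ff_strictMono g hg (Subtype.mk_lt_mk.mpr ?_)
      rw [Ordinal.add_one_eq_succ]; exact Order.lt_succ_of_not_isMax (not_isMax _)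
    have hbc : ff g ⟨ov (ofLex x).1 + 1, Set.mem_Iic.mpr hu1⟩
        ≤ ff g ⟨min (ov (ofLex y).1) α, Set.mem_Iic.mpr (min_le_right _ _)⟩ := by
      refine hFm (Subtype.mk_le_mk.mpr (le_min ?_ hu1))
      rw [Ordinal.add_one_eq_succ]; exact Order.succ_le_of_lt huv
    have hcd : ff g ⟨min (ov (ofLex y).1) α, Set.mem_Iic.mpr (min_le_right _ _)⟩
        ≤ ff g ⟨min (ov (ofLex y).1 + 1) α, Set.mem_Iic.mpr (min_le_right _ _)⟩ := by
      refine hFm (Subtype.mk_le_mk.mpr (min_le_min ?_ le_rfl))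
      exact le_self_add
    simp only [Phi, e1, e2]
    nlinarith [mul_nonneg hs0 (sub_nonneg.2 hcd), mul_lt_mul_of_pos_right ht1 (sub_pos.2 hab)]
  · have hv : ov (ofLex x).1 = ov (ofLex y).1 := congrArg Subtype.val h1
    have hts : ((ofLex x).2 : ℝ) < ((ofLex y).2 : ℝ) := Subtype.coe_lt_coe.mpr h2
    have hvα : ov (ofLex y).1 < α := by
      rcases eq_or_lt_of_le hyα with h | h
      · exact absurd (mem_icc_snd α hα1 hy h) (by linarith [snd_nonneg x])
      · exact h
    have hv1 : ov (ofLex y).1 + 1 ≤ α := by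
      rw [Ordinal.add_one_eq_succ]; exact Order.succ_le_of_lt hvα
    have e1 : (⟨min (ov (ofLex x).1) α, Set.mem_Iic.mpr (min_le_right _ _)⟩ : ↥(Set.Iic α))
        = ⟨min (ov (ofLex y).1) α, Set.mem_Iic.mpr (min_le_right _ _)⟩ :=
      Subtype.ext (by rw [hv])
    have e2 : (⟨min (ov (ofLex x).1 + 1) α, Set.mem_Iic.mpr (min_le_right _ _)⟩ : ↥(Set.Iic α))
        = ⟨min (ov (ofLex y).1 + 1) α, Set.mem_Iic.mpr (min_le_right _ _)⟩ :=
      Subtype.ext (by rw [hv])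
    have hcd : ff g ⟨min (ov (ofLex y).1) α, Set.mem_Iic.mpr (min_le_right _ _)⟩
        < ff g ⟨min (ov (ofLex y).1 + 1) α, Set.mem_Iic.mpr (min_le_right _ _)⟩ := by
      refine ff_strictMono g hg (Subtype.mk_lt_mk.mpr ?_)
      rw [min_eq_left hvα.le, min_eq_left hv1, Ordinal.add_one_eq_succ]
      exact Order.lt_succ_of_not_isMax (not_isMax _)
    simp only [Phi, e1, e2]
    nlinarith [sub_pos.2 hcd]

lemma Phi_nonneg {x : LongRay} : 0 ≤ Phi α g x := by
  have h1 : ff g ⟨min (ov (ofLex x).1) α, Set.mem_Iic.mpr (min_le_right _ _)⟩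
      ≤ ff g ⟨min (ov (ofLex x).1 + 1) α, Set.mem_Iic.mpr (min_le_right _ _)⟩ := by
    refine (ff_strictMono g hg).monotone (Subtype.mk_le_mk.mpr (min_le_min ?_ le_rfl))
    exact le_self_add
  have h2 := ff_nonneg g (⟨min (ov (ofLex x).1) α, Set.mem_Iic.mpr (min_le_right _ _)⟩ : ↥(Set.Iic α))
  have := snd_nonneg x
  simp only [Phi]
  nlinarith [mul_nonneg this (sub_nonneg.2 h1)]

lemma Phi_le {x : LongRay} (hx : x ∈ Icc botR (topR α hα1)) :
    Phi α g x ≤ ff g ⟨α, Set.mem_Iic.mpr le_rfl⟩ := by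
  have hxα := mem_icc_fst α hα1 hx
  have hFm := (ff_strictMono g hg).monotone
  rcases eq_or_lt_of_le hxα with h | h
  · have h0 := mem_icc_snd α hα1 hx h
    have e1 : (⟨min (ov (ofLex x).1) α, Set.mem_Iic.mpr (min_le_right _ _)⟩ : ↥(Set.Iic α))
        = ⟨α, Set.mem_Iic.mpr le_rfl⟩ := Subtype.ext (by rw [h]; exact min_self α)
    simp only [Phi, h0, zero_mul, add_zero, e1, le_refl]
  · have hu1 : ov (ofLex x).1 + 1 ≤ α := by
      rw [Ordinal.add_one_eq_succ]; exact Order.succ_le_of_lt h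
    have hab : ff g ⟨min (ov (ofLex x).1) α, Set.mem_Iic.mpr (min_le_right _ _)⟩
        ≤ ff g ⟨min (ov (ofLex x).1 + 1) α, Set.mem_Iic.mpr (min_le_right _ _)⟩ := by
      refine hFm (Subtype.mk_le_mk.mpr (min_le_min ?_ le_rfl))
      exact le_self_add
    have hbt : ff g ⟨min (ov (ofLex x).1 + 1) α, Set.mem_Iic.mpr (min_le_right _ _)⟩
        ≤ ff g ⟨α, Set.mem_Iic.mpr le_rfl⟩ :=
      hFm (Subtype.mk_le_mk.mpr (min_le_right _ _))
    have ht0 := snd_nonneg x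
    have ht1 := snd_lt_one x
    simp only [Phi]
    have := mul_le_mul_of_nonneg_right ht1.le (sub_nonneg.2 hab)
    linarith

lemma Phi_surjOn {y : ℝ} (hy0 : 0 ≤ y) (hy1 : y ≤ ff g ⟨α, Set.mem_Iic.mpr le_rfl⟩) :
    ∃ x ∈ Icc botR (topR α hα1), Phi α g x = y := by
  rcases eq_or_lt_of_le hy1 with rfl | hlt
  · exact ⟨topR α hα1, ⟨botR_le _, le_refl _⟩, Phi_topR α hα1 g⟩
  · set A : Set Ordinal := {o | ∃ h : o ≤ α, y < ff g ⟨o, Set.mem_Iic.mpr h⟩} with hA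
    have hAne : A.Nonempty := ⟨α, le_rfl, hlt⟩
    obtain ⟨m, hmA, hmin⟩ := Ordinal.lt_wf.has_min A hAne
    obtain ⟨hmα, hym⟩ := hmA
    have hm0 : m ≠ 0 := by
      rintro rfl
      have h0 : ff g ⟨0, Set.mem_Iic.mpr hmα⟩ = 0 :=
        ff_bot g _ (fun γ hγ => not_lt_zero (a := γ.val) (Subtype.coe_lt_coe.mpr hγ))
      rw [h0] at hym; linarith
    rcases Ordinal.zero_or_succ_or_isSuccLimit m with h | ⟨d, hd⟩ | hml
    · exact absurd h hm0
    · -- successor case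
      have hdm : d < m := by rw [← hd]; exact Order.lt_succ_of_not_isMax (not_isMax d)
      have hdα : d < α := lt_of_lt_of_le hdm hmα
      have hfd : ff g ⟨d, Set.mem_Iic.mpr hdα.le⟩ ≤ y :=
        not_lt.1 fun hc => hmin d ⟨hdα.le, hc⟩ hdm
      have hd1 : d + 1 = m := by rw [Ordinal.add_one_eq_succ, hd]
      set fd := ff g ⟨d, Set.mem_Iic.mpr hdα.le⟩ with hfddef
      set fm := ff g ⟨m, Set.mem_Iic.mpr hmα⟩ with hfmdef
      have hfdm : fd < fm := ff_strictMono g hg (Subtype.mk_lt_mk.mpr hdm)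
      set t := (y - fd) / (fm - fd) with htdef
      have ht0 : 0 ≤ t := div_nonneg (by linarith) (by linarith)
      have ht1 : t < 1 := (div_lt_one (by linarith)).2 (by linarith)
      have hdω : d < (Cardinal.aleph 1).ord := lt_trans hdα hα1
      refine ⟨mkR d hdω ⟨t, ht0, ht1⟩, ⟨botR_le _, ?_⟩, ?_⟩
      · rw [longRay_le_iff]; left
        exact (omega1_lt_iff _ _).mpr (by rw [ov_mkR]; exact hdα)
      · have e1 : (⟨min (ov (ofLex (mkR d hdω ⟨t, ht0, ht1⟩)).1) α,
            Set.mem_Iic.mpr (min_le_right _ _)⟩ : ↥(Set.Iic α))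
            = ⟨d, Set.mem_Iic.mpr hdα.le⟩ := by
          refine Subtype.ext ?_
          rw [ov_mkR]
          exact min_eq_left hdα.le
        have e2 : (⟨min (ov (ofLex (mkR d hdω ⟨t, ht0, ht1⟩)).1 + 1) α,
            Set.mem_Iic.mpr (min_le_right _ _)⟩ : ↥(Set.Iic α))
            = ⟨m, Set.mem_Iic.mpr hmα⟩ := by
          refine Subtype.ext ?_
          rw [ov_mkR, hd1]
          exact min_eq_left hmα
        simp only [Phi, e1, e2, snd_mkR]
        rw [← hfddef, ← hfmdef, htdef, div_mul_cancel₀ _ (by linarith : fm - fd ≠ 0)]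
        ring
    · -- limit case : contradiction
      exfalso
      refine absurd hym (not_lt.2 ?_)
      refine ff_limit_le g hg hy0 (fun γ hγ => ?_) (fun γ hγ => ?_)
      · have hγm : γ.val < m := Subtype.coe_lt_coe.mpr hγ
        have hsm : Order.succ γ.val < m := hml.succ_lt hγm
        refine ⟨⟨γ.val + 1, Set.mem_Iic.mpr ?_⟩, ?_, ?_⟩
        · rw [Ordinal.add_one_eq_succ]; exact le_trans hsm.le hmα
        · refine Subtype.mk_lt_mk.mpr ?_
          rw [Ordinal.add_one_eq_succ]
          exact Order.lt_succ_of_not_isMax (not_isMax _)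
        · refine Subtype.mk_lt_mk.mpr ?_
          rw [Ordinal.add_one_eq_succ]
          exact hsm
      · have hγm : γ.val < m := Subtype.coe_lt_coe.mpr hγ
        exact not_lt.1 fun hc => hmin γ.val ⟨γ.2, hc⟩ hγm

end Phi2

section Assemble
open Cardinal Ordinal

lemma countable_Iic (α : Ordinal.{0}) (hα1 : α < (Cardinal.aleph 1).ord) :
    Countable ↥(Set.Iic α) := by
  have h1 : α + 1 < (Cardinal.aleph 1).ord := by
    rw [Ordinal.add_one_eq_succ]
    exact (Cardinal.isSuccLimit_ord (Cardinal.aleph0_le_aleph 1)).succ_lt hα1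
  have h2 : #(↥(Set.Iio (α+1))) < ℵ₁ := by
    rw [Ordinal.mk_Iio_ordinal, Cardinal.lift_lt_aleph_one]
    exact Cardinal.lt_ord.mp h1
  have h3 : (Set.Iio (α+1)).Countable := (Cardinal.countable_iff_lt_aleph_one _).mpr h2
  have h4 : (Set.Iic α).Countable := h3.mono (fun o ho => by
      simp only [Set.mem_Iio, Set.mem_Iic] at *
      rw [Ordinal.add_one_eq_succ, Order.lt_succ_iff]
      exact ho)
  exact h4.to_subtype

lemma isArc_Icc (α : Ordinal.{0}) (hα1 : α < (Cardinal.aleph 1).ord) (h0 : 0 < α) :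
    IsArc (Icc botR (topR α hα1)) := by
  have := countable_Iic α hα1
  obtain ⟨g, hg⟩ := exists_injective_nat ↥(Set.Iic α)
  set D := ff g ⟨α, Set.mem_Iic.mpr le_rfl⟩ with hD
  have hbot : ff g ⟨0, Set.mem_Iic.mpr (zero_le (a := α))⟩ = 0 :=
    ff_bot g _ (fun γ hγ => not_lt_zero (a := γ.val) (Subtype.coe_lt_coe.mpr hγ))
  have hDpos : 0 < D := by
    have h := ff_strictMono g hg
      (show (⟨0, Set.mem_Iic.mpr (zero_le (a := α))⟩ : ↥(Set.Iic α))
        < ⟨α, Set.mem_Iic.mpr le_rfl⟩ from Subtype.mk_lt_mk.mpr h0)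
    rw [hbot] at h
    exact h
  set Ψ : ↥(Icc botR (topR α hα1)) → ↥(Icc (0:ℝ) 1) := fun x =>
    ⟨Phi α g x.val / D, div_nonneg (Phi_nonneg α g hg) hDpos.le,
      (div_le_one hDpos).2 (Phi_le α hα1 g hg x.2)⟩ with hΨ
  have hmono : StrictMono Ψ := fun a b hab =>
    Subtype.mk_lt_mk.mpr ((div_lt_div_iff_of_pos_right hDpos).mpr
      (Phi_strictMonoOn α hα1 g hg a.2 b.2 (Subtype.coe_lt_coe.mpr hab)))
  have hsurj : Function.Surjective Ψ := by
    intro z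
    obtain ⟨x, hx, hPhi⟩ := Phi_surjOn α hα1 g hg (y := z.val * D)
      (mul_nonneg z.2.1 hDpos.le) (by nlinarith [z.2.2])
    refine ⟨⟨x, hx⟩, Subtype.ext ?_⟩
    simp only [hΨ]
    rw [hPhi]
    field_simp
  exact ⟨(StrictMono.orderIsoOfSurjective Ψ hmono hsurj).toHomeomorph⟩

lemma exists_bound (S : Set LongRay) (hS : S.Countable) :
    ∃ (β : Ordinal.{0}) (hβ : β < (Cardinal.aleph 1).ord), 0 < β ∧
      ∀ x ∈ S, x ≤ mkR β hβ zeroI := by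
  have h1lt : (1 : Ordinal.{0}) < (Cardinal.aleph 1).ord := by
    rw [Cardinal.lt_ord]
    simpa using aleph0_lt_aleph_one.trans_le' Cardinal.one_le_aleph0
  rcases S.eq_empty_or_nonempty with rfl | hne
  · exact ⟨1, h1lt, zero_lt_one, fun x hx => absurd hx (Set.notMem_empty x)⟩
  · haveI : Nonempty ↥S := hne.to_subtype
    haveI : Countable ↥S := hS.to_subtype
    obtain ⟨e, he⟩ := exists_surjective_nat ↥S
    set o : ℕ → Ordinal.{0} := fun n => ov (ofLex (e n).val).1 with ho
    have hbd : ∀ n, o n < (Cardinal.aleph 1).ord := fun n => (ofLex (e n).val).1.2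
    have hsup : iSup o < (Cardinal.aleph 1).ord := by
      refine Ordinal.iSup_lt_ord ?_ hbd
      rw [Cardinal.mk_nat, Cardinal.isRegular_aleph_one.cof_eq]
      exact aleph0_lt_aleph_one
    have hβ : iSup o + 1 < (Cardinal.aleph 1).ord := by
      rw [Ordinal.add_one_eq_succ]
      exact (Cardinal.isSuccLimit_ord (Cardinal.aleph0_le_aleph 1)).succ_lt hsup
    refine ⟨iSup o + 1, hβ, ?_, ?_⟩
    · exact lt_of_le_of_lt zero_le (by
        rw [Ordinal.add_one_eq_succ]; exact Order.lt_succ_of_not_isMax (not_isMax _))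
    · intro x hx
      rw [longRay_le_iff]; left
      refine (omega1_lt_iff _ _).mpr ?_
      rw [ov_mkR]
      obtain ⟨n, hn⟩ := he ⟨x, hx⟩
      have h1 : ov (ofLex x).1 = o n := by rw [ho]; simp [hn]
      have h2 : o n ≤ iSup o := Ordinal.le_iSup o n
      calc ov (ofLex x).1 ≤ iSup o := h1 ▸ h2
        _ < iSup o + 1 := by
          rw [Ordinal.add_one_eq_succ]; exact Order.lt_succ_of_not_isMax (not_isMax _)

end Assemble


/-- Every countable subset of the long ray is bounded above, and consequently
the long ray is `ℵ₀`-arc connected. -/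

theorem longRay_countable_bounded_and_aleph0_ac :
    (∀ S : Set LongRay, S.Countable → ∃ b : LongRay, ∀ x ∈ S, x ≤ b) ∧
      Aleph0ArcConnected LongRay := by
  constructor
  · intro S hS
    obtain ⟨β, hβ, _, hbd⟩ := exists_bound S hS
    exact ⟨mkR β hβ zeroI, hbd⟩
  · intro S hS
    obtain ⟨β, hβ, h0, hbd⟩ := exists_bound S hS
    exact ⟨Icc botR (topR β hβ), isArc_Icc β hβ h0, fun x hx => ⟨botR_le x, hbd x hx⟩⟩
end

section
/- Let G be a finite graph containing a simple triod T = L_1 ∪ L_2 ∪ L_3 with common point q such that each L_i − {q} contains no branch points of G, and let p_i be an interior point of L_i for i = 1,2,3. Then every arc α in G containing p_1, p_2, p_3 contains q in its interior, and at least one endpoint of α lies in [q,p_1] ∪ [q,p_2] ∪ [q,p_3]. -/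
open Set Topology

open Classical
/-- A (connected, compact Hausdorff) topological finite graph structure on `X`:
finitely many arcs (edges), given as embeddings of `[0,1]`, covering `X`,
such that two distinct edges meet only in common endpoints. -/
structure TopGraph (X : Type*) [TopologicalSpace X] where
  n : ℕ
  edge : Fin n → Set.Icc (0:ℝ) 1 → X
  emb : ∀ i, Topology.IsEmbedding (edge i)
  cover : (⋃ i, Set.range (edge i)) = Set.univ
  meet : ∀ i j, i ≠ j → ∀ x ∈ Set.range (edge i) ∩ Set.range (edge j),
    (x = edge i i0 ∨ x = edge i i1) ∧ (x = edge j i0 ∨ x = edge j i1)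

/-- The degree (order) of a point of a finite graph: the number of edge-germs at it,
counted via incidences of edge endpoints.  (Points interior to an edge have order two;
they are never branch points.) -/
noncomputable def TopGraph.degree {X : Type*} [TopologicalSpace X] (G : TopGraph X) (x : X) : ℕ :=
  ∑ i : Fin G.n, ((if G.edge i i0 = x then 1 else 0) + (if G.edge i i1 = x then 1 else 0))

/-- A branch point of a finite graph is a point of order at least `3`. -/
def TopGraph.IsBranchPoint {X : Type*} [TopologicalSpace X] (G : TopGraph X) (x : X) : Prop :=
  3 ≤ G.degree x

namespace Triod

abbrev I01 := Set.Icc (0:ℝ) 1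

set_option linter.unusedSectionVars false

lemma i0_le (m : I01) : i0 ≤ m := by
  show (0:ℝ) ≤ m.1; exact m.2.1

lemma le_i1 (m : I01) : m ≤ i1 := by
  show m.1 ≤ (1:ℝ); exact m.2.2

lemma i0_ne_i1 : (i0 : I01) ≠ i1 := by
  intro h; have := congrArg Subtype.val h; norm_num [i0, i1] at this

lemma lt_iff_val {a b : I01} : a < b ↔ a.1 < b.1 := Iff.rfl
lemma le_iff_val {a b : I01} : a ≤ b ↔ a.1 ≤ b.1 := Iff.rfl

lemma ne_i0_iff {a : I01} : a ≠ i0 ↔ 0 < a.1 := by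
  constructor
  · intro h; rcases lt_or_eq_of_le a.2.1 with h' | h'
    · exact h'
    · exact absurd (Subtype.ext h'.symm) h
  · intro h he; rw [he] at h; simp [i0] at h

lemma ne_i1_iff {a : I01} : a ≠ i1 ↔ a.1 < 1 := by
  constructor
  · intro h; rcases lt_or_eq_of_le a.2.2 with h' | h'
    · exact h'
    · exact absurd (Subtype.ext h') h
  · intro h he; rw [he] at h; simp [i1] at h

/-- image of an `Icc` in the subtype under a continuous map is preconnected. -/
lemma preconn_image_Icc {X : Type*} [TopologicalSpace X] (f : I01 → X)
    (hf : Continuous f) (a b : I01) : IsPreconnected (f '' Set.Icc a b) := by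
  have h01 : (0:ℝ) ≤ 1 := by norm_num
  have : f '' Set.Icc a b = (f ∘ Set.projIcc 0 1 h01) '' Set.Icc a.1 b.1 := by
    ext y; constructor
    · rintro ⟨m, hm, rfl⟩
      exact ⟨m.1, ⟨hm.1, hm.2⟩, by simp [Set.projIcc_of_mem h01 m.2]⟩
    · rintro ⟨r, hr, rfl⟩
      have hr01 : r ∈ Set.Icc (0:ℝ) 1 := ⟨a.2.1.trans hr.1, hr.2.trans b.2.2⟩
      refine ⟨⟨r, hr01⟩, ⟨hr.1, hr.2⟩, ?_⟩
      simp [Set.projIcc_of_mem h01 hr01]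
  rw [this]
  exact isPreconnected_Icc.image _ (hf.comp continuous_projIcc).continuousOn

lemma preconn_image_Ico {X : Type*} [TopologicalSpace X] (f : I01 → X)
    (hf : Continuous f) (a b : I01) : IsPreconnected (f '' Set.Ico a b) := by
  have h01 : (0:ℝ) ≤ 1 := by norm_num
  have : f '' Set.Ico a b = (f ∘ Set.projIcc 0 1 h01) '' Set.Ico a.1 b.1 := by
    ext y; constructor
    · rintro ⟨m, hm, rfl⟩
      exact ⟨m.1, ⟨hm.1, hm.2⟩, by simp [Set.projIcc_of_mem h01 m.2]⟩
    · rintro ⟨r, hr, rfl⟩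
      have hr01 : r ∈ Set.Icc (0:ℝ) 1 := ⟨a.2.1.trans hr.1, (le_of_lt hr.2).trans b.2.2⟩
      refine ⟨⟨r, hr01⟩, ⟨hr.1, hr.2⟩, ?_⟩
      simp [Set.projIcc_of_mem h01 hr01]
  rw [this]
  exact isPreconnected_Ico.image _ (hf.comp continuous_projIcc).continuousOn

variable {X : Type*} [TopologicalSpace X] [T2Space X]

/-- Continuous injective maps from the (compact) unit interval are closed maps. -/
lemma image_closed (ψ : I01 → X) (hc : Continuous ψ) {F : Set I01} (hF : IsClosed F) :
    IsClosed (ψ '' F) :=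
  ((hF.isCompact).image hc).isClosed

/-- preimage of a preconnected subset of the range under a continuous injective map
from the unit interval is preconnected. -/
lemma inv_preconn (ψ : I01 → X) (hc : Continuous ψ) (hi : Function.Injective ψ)
    {B : Set X} (hB : IsPreconnected B) (hBr : B ⊆ Set.range ψ) :
    IsPreconnected (ψ ⁻¹' B) := by
  rw [isPreconnected_closed_iff]
  intro F1 F2 hF1 hF2 hcov h1 h2
  have hBc : B ⊆ ψ '' F1 ∪ ψ '' F2 := by
    intro y hy
    obtain ⟨m, rfl⟩ := hBr hy
    rcases hcov hy with h | h
    · exact Or.inl ⟨m, h, rfl⟩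
    · exact Or.inr ⟨m, h, rfl⟩
  have hB1 : (B ∩ ψ '' F1).Nonempty := by
    obtain ⟨m, hm⟩ := h1; exact ⟨ψ m, hm.1, m, hm.2, rfl⟩
  have hB2 : (B ∩ ψ '' F2).Nonempty := by
    obtain ⟨m, hm⟩ := h2; exact ⟨ψ m, hm.1, m, hm.2, rfl⟩
  obtain ⟨y, hyB, hy1, hy2⟩ := isPreconnected_closed_iff.1 hB (ψ '' F1) (ψ '' F2)
    (image_closed ψ hc hF1) (image_closed ψ hc hF2) hBc hB1 hB2
  obtain ⟨m1, hm1, rfl⟩ := hy1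
  obtain ⟨m2, hm2, hm2e⟩ := hy2
  have : m2 = m1 := hi hm2e
  subst this
  exact ⟨m2, hyB, hm1, hm2⟩

/-- Points of `ψ` with parameter between two parameters of points of a preconnected
subset `B ⊆ range ψ` also lie in `B`. -/
lemma conn_between (ψ : I01 → X) (hc : Continuous ψ) (hi : Function.Injective ψ)
    {B : Set X} (hB : IsPreconnected B) (hBr : B ⊆ Set.range ψ)
    {cy cz : I01} (hy : ψ cy ∈ B) (hz : ψ cz ∈ B) :
    ∀ m : I01, cy ≤ m → m ≤ cz → ψ m ∈ B := by
  intro m h1 h2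
  have hQ : IsPreconnected (ψ ⁻¹' B) := inv_preconn ψ hc hi hB hBr
  have hR : IsPreconnected (Subtype.val '' (ψ ⁻¹' B) : Set ℝ) :=
    hQ.image _ continuous_subtype_val.continuousOn
  have hcy : (cy.1 : ℝ) ∈ Subtype.val '' (ψ ⁻¹' B) := ⟨cy, hy, rfl⟩
  have hcz : (cz.1 : ℝ) ∈ Subtype.val '' (ψ ⁻¹' B) := ⟨cz, hz, rfl⟩
  have : m.1 ∈ Subtype.val '' (ψ ⁻¹' B) :=
    hR.Icc_subset hcy hcz ⟨h1, h2⟩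
  obtain ⟨m', hm', hme⟩ := this
  rwa [show m = m' from Subtype.ext hme.symm]


/-- If both small subarcs of `L` on either side of `σ` land in the range of a single
map `ψ` with `ψ i0 = L σ`, we get a contradiction. -/
lemma one_side (L : I01 → X) (hLc : Continuous L) (hLi : Function.Injective L)
    {a' σ b' : I01} (ha : a' < σ) (hb : σ < b')
    (ψ : I01 → X) (hc : Continuous ψ) (hi : Function.Injective ψ) (h0 : ψ i0 = L σ)
    (hm : L '' Set.Icc a' σ ⊆ Set.range ψ) (hp : L '' Set.Icc σ b' ⊆ Set.range ψ) :
    False := by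
  have hBm : IsPreconnected (L '' Set.Icc a' σ) := preconn_image_Icc L hLc _ _
  have hBp : IsPreconnected (L '' Set.Icc σ b' ) := preconn_image_Icc L hLc _ _
  have hσm : ψ i0 ∈ L '' Set.Icc a' σ := by
    rw [h0]; exact ⟨σ, ⟨le_of_lt ha, le_refl _⟩, rfl⟩
  have hσp : ψ i0 ∈ L '' Set.Icc σ b' := by
    rw [h0]; exact ⟨σ, ⟨le_refl _, le_of_lt hb⟩, rfl⟩
  have ham : L a' ∈ L '' Set.Icc a' σ := ⟨a', ⟨le_refl _, le_of_lt ha⟩, rfl⟩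
  have hbp : L b' ∈ L '' Set.Icc σ b' := ⟨b', ⟨le_of_lt hb, le_refl _⟩, rfl⟩
  obtain ⟨cm, hcm⟩ := hm ham
  obtain ⟨cp, hcp⟩ := hp hbp
  have hcm0 : cm ≠ i0 := by
    intro h; rw [h, h0] at hcm; exact absurd (hLi hcm) (ne_of_gt ha)
  have hcp0 : cp ≠ i0 := by
    intro h; rw [h, h0] at hcp; exact absurd (hLi hcp) (ne_of_lt hb)
  set m := min cm cp with hmdef
  have hmm : ψ m ∈ L '' Set.Icc a' σ :=
    conn_between ψ hc hi hBm hm hσm (by rw [hcm]; exact ham)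
      m (i0_le m) (min_le_left _ _)
  have hmp : ψ m ∈ L '' Set.Icc σ b' :=
    conn_between ψ hc hi hBp hp hσp (by rw [hcp]; exact hbp) m (i0_le m) (min_le_right _ _)
  obtain ⟨w1, hw1, he1⟩ := hmm
  obtain ⟨w2, hw2, he2⟩ := hmp
  have hw12 : w1 = w2 := hLi (he1.trans he2.symm)
  have hw1σ : w1 = σ := le_antisymm hw1.2 (hw12 ▸ hw2.1)
  have : ψ m = ψ i0 := by rw [h0, ← hw1σ, he1]
  have hm0 : m = i0 := hi this
  rcases min_eq_iff.1 hmdef.symm with ⟨h, _⟩ | ⟨h, _⟩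
  · exact hcm0 (h ▸ hm0 ▸ rfl)
  · exact hcp0 (h ▸ hm0 ▸ rfl)

/-- From a neighborhood `T` of an interior point `L σ` of an arc, extract a small
two-sided subarc inside `T`. -/
lemma interval_in_nbhd (L : I01 → X) (hLc : Continuous L) {σ : I01}
    (h0 : 0 < σ.1) (h1 : σ.1 < 1) {T : Set X} (hT : T ∈ nhds (L σ)) :
    ∃ a' b' : I01, a' < σ ∧ σ < b' ∧ L '' Set.Icc a' σ ⊆ T ∧ L '' Set.Icc σ b' ⊆ T := by
  have hpre : L ⁻¹' T ∈ nhds σ := hLc.continuousAt.preimage_mem_nhds hT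
  obtain ⟨ε, hε, hball⟩ := Metric.mem_nhds_iff.1 hpre
  set δ := min (ε/2) (min σ.1 (1 - σ.1)) with hδdef
  have hδ : 0 < δ := lt_min (by linarith) (lt_min h0 (by linarith))
  have hδσ : δ ≤ σ.1 := le_trans (min_le_right _ _) (min_le_left _ _)
  have hδσ' : δ ≤ 1 - σ.1 := le_trans (min_le_right _ _) (min_le_right _ _)
  have hδε : δ < ε := lt_of_le_of_lt (min_le_left _ _) (by linarith)
  refine ⟨⟨σ.1 - δ, by constructor <;> [linarith; linarith [σ.2.2]]⟩,
    ⟨σ.1 + δ, by constructor <;> [linarith [σ.2.1]; linarith]⟩,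
    by show σ.1 - δ < σ.1; linarith, by show σ.1 < σ.1 + δ; linarith, ?_, ?_⟩
  · rintro y ⟨w, hw, rfl⟩
    apply hball
    rw [Metric.mem_ball, Subtype.dist_eq, Real.dist_eq, abs_sub_lt_iff]
    have h1' : σ.1 - δ ≤ w.1 := hw.1
    have h2' : w.1 ≤ σ.1 := hw.2
    constructor <;> linarith
  · rintro y ⟨w, hw, rfl⟩
    apply hball
    rw [Metric.mem_ball, Subtype.dist_eq, Real.dist_eq, abs_sub_lt_iff]
    have h1' : σ.1 ≤ w.1 := hw.1
    have h2' : w.1 ≤ σ.1 + δ := hw.2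
    constructor <;> linarith


lemma range_eq_image_Icc {Y : Type*} (ψ : I01 → Y) : ψ '' Set.Icc i0 i1 = Set.range ψ := by
  ext y; constructor
  · rintro ⟨m, _, rfl⟩; exact ⟨m, rfl⟩
  · rintro ⟨m, rfl⟩; exact ⟨m, ⟨i0_le m, le_i1 m⟩, rfl⟩

lemma split_two {S F1 F2 : Set X} (hS : IsPreconnected S) (hF1 : IsClosed F1)
    (hF2 : IsClosed F2) (hcov : S ⊆ F1 ∪ F2) {x : X} (hint : F1 ∩ F2 ⊆ {x})
    (hx : x ∉ S) : S ⊆ F1 ∨ S ⊆ F2 := by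
  by_contra h
  push_neg at h
  obtain ⟨h1, h2⟩ := h
  have hn1 : (S ∩ F2).Nonempty := by
    obtain ⟨y, hy, hy1⟩ := not_subset.1 h1
    rcases hcov hy with h | h
    · exact absurd h hy1
    · exact ⟨y, hy, h⟩
  have hn2 : (S ∩ F1).Nonempty := by
    obtain ⟨y, hy, hy2⟩ := not_subset.1 h2
    rcases hcov hy with h | h
    · exact ⟨y, hy, h⟩
    · exact absurd h hy2
  obtain ⟨y, hyS, hy12⟩ := isPreconnected_closed_iff.1 hS F1 F2 hF1 hF2 hcov hn2 hn1
  have : y = x := hint hy12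
  exact hx (this ▸ hyS)

lemma image_Icc_diff_right (L : I01 → X) (hLi : Function.Injective L) (u v : I01) :
    L '' Set.Icc u v \ {L v} = L '' Set.Ico u v := by
  ext y; constructor
  · rintro ⟨⟨w, hw, rfl⟩, hy⟩
    refine ⟨w, ⟨hw.1, lt_of_le_of_ne hw.2 ?_⟩, rfl⟩
    intro h; exact hy (by rw [h]; exact Set.mem_singleton _)
  · rintro ⟨w, hw, rfl⟩
    refine ⟨⟨w, ⟨hw.1, le_of_lt hw.2⟩, rfl⟩, ?_⟩
    intro h; exact absurd (hLi h) (ne_of_lt hw.2)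

lemma image_Icc_diff_left (L : I01 → X) (hLi : Function.Injective L) (u v : I01) :
    L '' Set.Icc u v \ {L u} = L '' Set.Ioc u v := by
  ext y; constructor
  · rintro ⟨⟨w, hw, rfl⟩, hy⟩
    refine ⟨w, ⟨lt_of_le_of_ne hw.1 ?_, hw.2⟩, rfl⟩
    intro h; exact hy (by rw [← h]; exact Set.mem_singleton _)
  · rintro ⟨w, hw, rfl⟩
    refine ⟨⟨w, ⟨le_of_lt hw.1, hw.2⟩, rfl⟩, ?_⟩
    intro h; exact absurd (hLi h) (ne_of_gt hw.1)

lemma two_star_nbhd (L : I01 → X) (hLc : Continuous L) (hLi : Function.Injective L)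
    {σ : I01} (hσ0 : 0 < σ.1) (hσ1 : σ.1 < 1)
    (ψ1 ψ2 : I01 → X) (hc1 : Continuous ψ1) (hi1 : Function.Injective ψ1)
    (hc2 : Continuous ψ2) (hi2 : Function.Injective ψ2)
    (h10 : ψ1 i0 = L σ) (h20 : ψ2 i0 = L σ)
    (hint : Set.range ψ1 ∩ Set.range ψ2 ⊆ {L σ})
    (hnb : ∀ c1 c2 : I01, i0 < c1 → i0 < c2 →
      ψ1 '' Set.Icc i0 c1 ∪ ψ2 '' Set.Icc i0 c2 ∈ nhds (L σ)) :
    Set.range L ∈ nhds (L σ) := by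
  have hi0i1 : (i0 : I01) < i1 := by
    rw [show ((i0 : I01) < i1) ↔ ((0:ℝ) < 1) from Iff.rfl]; norm_num
  have hT : Set.range ψ1 ∪ Set.range ψ2 ∈ nhds (L σ) := by
    have := hnb i1 i1 hi0i1 hi0i1
    rwa [range_eq_image_Icc, range_eq_image_Icc] at this
  obtain ⟨a', b', ha', hb', hsub1, hsub2⟩ := interval_in_nbhd L hLc hσ0 hσ1 hT
  have hF1 : IsClosed (Set.range ψ1) := by
    rw [← Set.image_univ]; exact image_closed ψ1 hc1 isClosed_univ
  have hF2 : IsClosed (Set.range ψ2) := by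
    rw [← Set.image_univ]; exact image_closed ψ2 hc2 isClosed_univ
  have hsm : L '' Set.Icc a' σ ⊆ Set.range ψ1 ∨ L '' Set.Icc a' σ ⊆ Set.range ψ2 := by
    have hid := image_Icc_diff_right L hLi a' σ
    have hps : IsPreconnected (L '' Set.Ico a' σ) := preconn_image_Ico L hLc _ _
    have hnotin : L σ ∉ L '' Set.Ico a' σ := by
      rw [← hid]; exact fun h => h.2 rfl
    have hcov : L '' Set.Ico a' σ ⊆ Set.range ψ1 ∪ Set.range ψ2 := fun y hy =>
      hsub1 (Set.image_mono (f := L) Set.Ico_subset_Icc_self hy)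
    rcases split_two hps hF1 hF2 hcov hint hnotin with h | h
    · left
      intro y hy
      by_cases hyσ : y = L σ
      · exact hyσ ▸ ⟨i0, h10⟩
      · exact h (by rw [← hid]; exact ⟨hy, hyσ⟩)
    · right
      intro y hy
      by_cases hyσ : y = L σ
      · exact hyσ ▸ ⟨i0, h20⟩
      · exact h (by rw [← hid]; exact ⟨hy, hyσ⟩)
  have hsp : L '' Set.Icc σ b' ⊆ Set.range ψ1 ∨ L '' Set.Icc σ b' ⊆ Set.range ψ2 := by
    have hid := image_Icc_diff_left L hLi σ b'
    have hps : IsPreconnected (L '' Set.Ioc σ b') := by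
      have h01 : (0:ℝ) ≤ 1 := by norm_num
      have heq : L '' Set.Ioc σ b' = (L ∘ Set.projIcc 0 1 h01) '' Set.Ioc σ.1 b'.1 := by
        ext y; constructor
        · rintro ⟨m, hm, rfl⟩
          exact ⟨m.1, ⟨hm.1, hm.2⟩, by simp [Set.projIcc_of_mem h01 m.2]⟩
        · rintro ⟨r, hr, rfl⟩
          have hr01 : r ∈ Set.Icc (0:ℝ) 1 := ⟨σ.2.1.trans (le_of_lt hr.1), hr.2.trans b'.2.2⟩
          exact ⟨⟨r, hr01⟩, ⟨hr.1, hr.2⟩, by simp [Set.projIcc_of_mem h01 hr01]⟩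
      rw [heq]
      exact isPreconnected_Ioc.image _ ((hLc.comp continuous_projIcc)).continuousOn
    have hnotin : L σ ∉ L '' Set.Ioc σ b' := by
      rw [← hid]; exact fun h => h.2 rfl
    have hcov : L '' Set.Ioc σ b' ⊆ Set.range ψ1 ∪ Set.range ψ2 := fun y hy =>
      hsub2 (Set.image_mono (f := L) Set.Ioc_subset_Icc_self hy)
    rcases split_two hps hF1 hF2 hcov hint hnotin with h | h
    · left
      intro y hy
      by_cases hyσ : y = L σ
      · exact hyσ ▸ ⟨i0, h10⟩
      · exact h (by rw [← hid]; exact ⟨hy, hyσ⟩)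
    · right
      intro y hy
      by_cases hyσ : y = L σ
      · exact hyσ ▸ ⟨i0, h20⟩
      · exact h (by rw [← hid]; exact ⟨hy, hyσ⟩)
  have key : ∀ ψA ψB : I01 → X, Continuous ψA → Function.Injective ψA →
      Continuous ψB → Function.Injective ψB → ψA i0 = L σ → ψB i0 = L σ →
      (∀ c1 c2 : I01, i0 < c1 → i0 < c2 →
        ψA '' Set.Icc i0 c1 ∪ ψB '' Set.Icc i0 c2 ∈ nhds (L σ)) →
      L '' Set.Icc a' σ ⊆ Set.range ψA → L '' Set.Icc σ b' ⊆ Set.range ψB →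
      Set.range L ∈ nhds (L σ) := by
    intro ψA ψB hcA hiA hcB hiB h0A h0B hnbAB hmA hpB
    have hBm : IsPreconnected (L '' Set.Icc a' σ) := preconn_image_Icc L hLc _ _
    have hBp : IsPreconnected (L '' Set.Icc σ b') := preconn_image_Icc L hLc _ _
    have hσm : ψA i0 ∈ L '' Set.Icc a' σ := by
      rw [h0A]; exact ⟨σ, ⟨le_of_lt ha', le_refl _⟩, rfl⟩
    have hσp : ψB i0 ∈ L '' Set.Icc σ b' := by
      rw [h0B]; exact ⟨σ, ⟨le_refl _, le_of_lt hb'⟩, rfl⟩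
    have ham : L a' ∈ L '' Set.Icc a' σ := ⟨a', ⟨le_refl _, le_of_lt ha'⟩, rfl⟩
    have hbp : L b' ∈ L '' Set.Icc σ b' := ⟨b', ⟨le_of_lt hb', le_refl _⟩, rfl⟩
    obtain ⟨cA, hcA'⟩ := hmA ham
    obtain ⟨cB, hcB'⟩ := hpB hbp
    have hcA0 : i0 < cA := by
      refine lt_of_le_of_ne (i0_le cA) (fun h => ?_)
      rw [← h, h0A] at hcA'
      exact absurd (hLi hcA') (ne_of_gt ha')
    have hcB0 : i0 < cB := by
      refine lt_of_le_of_ne (i0_le cB) (fun h => ?_)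
      rw [← h, h0B] at hcB'
      exact absurd (hLi hcB') (ne_of_lt hb')
    have hin1 : ψA '' Set.Icc i0 cA ⊆ Set.range L := by
      rintro y ⟨m, hm, rfl⟩
      obtain ⟨w, _, hw⟩ := conn_between ψA hcA hiA hBm hmA hσm
        (by rw [hcA']; exact ham) m hm.1 hm.2
      exact ⟨w, hw⟩
    have hin2 : ψB '' Set.Icc i0 cB ⊆ Set.range L := by
      rintro y ⟨m, hm, rfl⟩
      obtain ⟨w, _, hw⟩ := conn_between ψB hcB hiB hBp hpB hσp
        (by rw [hcB']; exact hbp) m hm.1 hm.2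
      exact ⟨w, hw⟩
    exact Filter.mem_of_superset (hnbAB cA cB hcA0 hcB0) (Set.union_subset hin1 hin2)
  rcases hsm with h1 | h1 <;> rcases hsp with h2 | h2
  · exact absurd (one_side L hLc hLi ha' hb' ψ1 hc1 hi1 h10 h1 h2) not_false
  · exact key ψ1 ψ2 hc1 hi1 hc2 hi2 h10 h20 hnb h1 h2
  · exact key ψ2 ψ1 hc2 hi2 hc1 hi1 h20 h10
      (fun c1 c2 hc1' hc2' => by rw [Set.union_comm]; exact hnb c2 c1 hc2' hc1') h1 h2
  · exact absurd (one_side L hLc hLi ha' hb' ψ2 hc2 hi2 h20 h1 h2) not_false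

lemma nbhd_pattern (G : TopGraph X) (x : X) (T : Set X)
    (h : ∀ j : Fin G.n, ∃ C : Set X, IsClosed C ∧ x ∉ C ∧ Set.range (G.edge j) \ C ⊆ T) :
    T ∈ nhds x := by
  choose C hCc hCx hCT using h
  refine Filter.mem_of_superset (IsOpen.mem_nhds ?_ ?_ : (⋃ j, C j)ᶜ ∈ nhds x) ?_
  · exact (isClosed_iUnion_of_finite hCc).isOpen_compl
  · simp only [Set.mem_compl_iff, Set.mem_iUnion, not_exists]
    exact hCx
  · intro y hy
    have hy' : y ∈ (⋃ j, Set.range (G.edge j)) := by rw [G.cover]; trivial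
    obtain ⟨j, hj⟩ := Set.mem_iUnion.1 hy'
    simp only [Set.mem_compl_iff, Set.mem_iUnion, not_exists] at hy
    exact hCT j ⟨hj, hy j⟩


/-- affine reparametrization of the interval from `u` towards `v`. -/
def aff (u v : I01) (s : I01) : I01 :=
  ⟨u.1 + s.1 * (v.1 - u.1), by
    constructor
    · nlinarith [mul_nonneg (by linarith [s.2.2] : (0:ℝ) ≤ 1 - s.1) u.2.1,
        mul_nonneg s.2.1 v.2.1]
    · nlinarith [mul_le_mul_of_nonneg_left u.2.2 (by linarith [s.2.2] : (0:ℝ) ≤ 1 - s.1),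
        mul_le_mul_of_nonneg_left v.2.2 s.2.1]⟩

lemma aff_val (u v s : I01) : (aff u v s).1 = u.1 + s.1 * (v.1 - u.1) := rfl

lemma aff_zero (u v : I01) : aff u v i0 = u := by
  apply Subtype.ext; simp [aff_val, i0]

lemma aff_cont (u v : I01) : Continuous (aff u v) := by
  apply Continuous.subtype_mk
  exact continuous_const.add (continuous_subtype_val.mul continuous_const)

lemma val_ne_of_ne {u v : I01} (h : u ≠ v) : u.1 ≠ v.1 := fun he => h (Subtype.ext he)

lemma aff_inj {u v : I01} (h : u ≠ v) : Function.Injective (aff u v) := by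
  intro s s' he
  have hv := congrArg Subtype.val he
  rw [aff_val, aff_val] at hv
  have : v.1 - u.1 ≠ 0 := sub_ne_zero.2 (val_ne_of_ne h).symm
  apply Subtype.ext
  have := mul_right_cancel₀ this (by linarith : s.1 * (v.1 - u.1) = s'.1 * (v.1 - u.1))
  exact this

lemma lt_val {a b : I01} (h : a < b) : a.1 < b.1 := h
lemma i0_lt_val {c : I01} (h : i0 < c) : 0 < c.1 := h

/-- the half-edge star at an endpoint of an edge. -/
lemma end_star (G : TopGraph X) (j : Fin G.n) (b : Bool) (x : X)
    (hxe : G.edge j (cond b i1 i0) = x) :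
    ∃ ψ : I01 → X, Continuous ψ ∧ Function.Injective ψ ∧ ψ i0 = x ∧
      Set.range ψ ⊆ Set.range (G.edge j) ∧
      (∀ c : I01, i0 < c → ∃ C : Set X, IsClosed C ∧ x ∉ C ∧
        Set.range (G.edge j) \ C ⊆ ψ '' Set.Icc i0 c) ∧
      (∀ y ∈ Set.range ψ, y = G.edge j i0 ∨ y = G.edge j i1 → y = x) := by
  have hec : Continuous (G.edge j) := (G.emb j).continuous
  have hei : Function.Injective (G.edge j) := (G.emb j).injective
  have half : I01 := ⟨1/2, by norm_num⟩
  cases b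
  · -- end at i0
    simp only [cond] at hxe
    refine ⟨G.edge j ∘ aff i0 ⟨1/2, by norm_num⟩, hec.comp (aff_cont _ _),
      hei.comp (aff_inj (fun h => by
        have := congrArg Subtype.val h; norm_num [i0] at this)), ?_, ?_, ?_, ?_⟩
    · show G.edge j (aff i0 _ i0) = x; rw [aff_zero]; exact hxe
    · rintro y ⟨s, rfl⟩; exact ⟨aff i0 _ s, rfl⟩
    · intro c hc
      refine ⟨G.edge j '' {w : I01 | c.1/2 ≤ w.1}, ?_, ?_, ?_⟩
      · apply image_closed _ hec
        exact isClosed_le continuous_const continuous_subtype_val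
      · rintro ⟨w, hw, hwe⟩
        rw [← hxe] at hwe
        have : w = i0 := hei hwe
        rw [this] at hw
        have hc' : 0 < c.1 := i0_lt_val hc
        simp only [Set.mem_setOf_eq, i0] at hw
        linarith
      · rintro y ⟨⟨w, rfl⟩, hyC⟩
        have hw : w.1 < c.1/2 := by
          by_contra hcon
          exact hyC ⟨w, by push_neg at hcon; exact hcon, rfl⟩
        have hw2 : 2 * w.1 ∈ Set.Icc (0:ℝ) 1 := by
          constructor
          · linarith [w.2.1]
          · have : c.1 ≤ 1 := c.2.2; linarith
        refine ⟨⟨2 * w.1, hw2⟩, ⟨i0_le _, ?_⟩, ?_⟩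
        · show 2 * w.1 ≤ c.1; linarith
        · show G.edge j (aff i0 _ _) = G.edge j w
          congr 1
          apply Subtype.ext
          rw [aff_val]
          show (i0:I01).1 + 2 * w.1 * ((1:ℝ)/2 - (i0:I01).1) = w.1
          show (0:ℝ) + 2 * w.1 * ((1:ℝ)/2 - 0) = w.1
          ring
    · rintro y ⟨s, rfl⟩ hy
      rcases hy with hy | hy
      · have : aff i0 ⟨1/2, by norm_num⟩ s = i0 := hei hy
        have hv := congrArg Subtype.val this
        rw [aff_val] at hv
        norm_num [i0] at hv
        have : s = i0 := Subtype.ext (by simpa [i0] using hv)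
        rw [show (G.edge j ∘ aff i0 ⟨1/2, by norm_num⟩) s = G.edge j (aff i0 ⟨1/2, by norm_num⟩ s) from rfl, this, aff_zero]
        exact hxe
      · exfalso
        have : aff i0 ⟨1/2, by norm_num⟩ s = i1 := hei hy
        have hv := congrArg Subtype.val this
        rw [aff_val] at hv
        norm_num [i0, i1] at hv
        linarith [s.2.2]
  · -- end at i1
    simp only [cond] at hxe
    refine ⟨G.edge j ∘ aff i1 ⟨1/2, by norm_num⟩, hec.comp (aff_cont _ _),
      hei.comp (aff_inj (fun h => by
        have := congrArg Subtype.val h; norm_num [i1] at this)), ?_, ?_, ?_, ?_⟩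
    · show G.edge j (aff i1 _ i0) = x; rw [aff_zero]; exact hxe
    · rintro y ⟨s, rfl⟩; exact ⟨aff i1 _ s, rfl⟩
    · intro c hc
      refine ⟨G.edge j '' {w : I01 | w.1 ≤ 1 - c.1/2}, ?_, ?_, ?_⟩
      · apply image_closed _ hec
        exact isClosed_le continuous_subtype_val continuous_const
      · rintro ⟨w, hw, hwe⟩
        rw [← hxe] at hwe
        have : w = i1 := hei hwe
        rw [this] at hw
        have hc' : 0 < c.1 := i0_lt_val hc
        simp only [Set.mem_setOf_eq, i1] at hw
        linarith
      · rintro y ⟨⟨w, rfl⟩, hyC⟩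
        have hw : 1 - c.1/2 < w.1 := by
          by_contra hcon
          exact hyC ⟨w, by push_neg at hcon; exact hcon, rfl⟩
        have hw2 : 2 * (1 - w.1) ∈ Set.Icc (0:ℝ) 1 := by
          constructor
          · linarith [w.2.2]
          · have : c.1 ≤ 1 := c.2.2; linarith
        refine ⟨⟨2 * (1 - w.1), hw2⟩, ⟨i0_le _, ?_⟩, ?_⟩
        · show 2 * (1 - w.1) ≤ c.1; linarith
        · show G.edge j (aff i1 _ _) = G.edge j w
          congr 1
          apply Subtype.ext
          rw [aff_val]
          show (i1:I01).1 + 2 * (1 - w.1) * ((1:ℝ)/2 - (i1:I01).1) = w.1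
          norm_num [i1]; ring
    · rintro y ⟨s, rfl⟩ hy
      rcases hy with hy | hy
      · exfalso
        have : aff i1 ⟨1/2, by norm_num⟩ s = i0 := hei hy
        have hv := congrArg Subtype.val this
        rw [aff_val] at hv
        norm_num [i0, i1] at hv
        linarith [s.2.2]
      · have : aff i1 ⟨1/2, by norm_num⟩ s = i1 := hei hy
        have hv := congrArg Subtype.val this
        rw [aff_val] at hv
        norm_num [i1] at hv
        have hs : s = i0 := Subtype.ext (by simpa [i0] using hv)
        rw [show (G.edge j ∘ aff i1 ⟨1/2, by norm_num⟩) s = G.edge j (aff i1 ⟨1/2, by norm_num⟩ s) from rfl, hs, aff_zero]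
        exact hxe


lemma ne_i0_of_pos {a : I01} (h : 0 < a.1) : a ≠ i0 := by
  intro he; rw [he] at h; norm_num [i0] at h

lemma local_main (G : TopGraph X) (L : I01 → X) (hLc : Continuous L)
    (hLi : Function.Injective L) {σ : I01} (hσ0 : 0 < σ.1) (hσ1 : σ.1 < 1)
    (hdeg : G.degree (L σ) ≤ 2) : Set.range L ∈ nhds (L σ) := by
  classical
  set x := L σ with hxdef
  set E : Finset (Fin G.n × Bool) :=
    Finset.univ.filter (fun jb => G.edge jb.1 (cond jb.2 i1 i0) = x) with hEdef
  have hmem : ∀ jb : Fin G.n × Bool, jb ∈ E ↔ G.edge jb.1 (cond jb.2 i1 i0) = x := by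
    intro jb; simp [hEdef]
  have hcard : E.card = G.degree x := by
    rw [hEdef, Finset.card_filter, TopGraph.degree, Fintype.sum_prod_type]
    apply Finset.sum_congr rfl
    intro j _
    rw [Fintype.sum_bool]
    simp only [cond]
    rw [add_comm]
  have hc2 : E.card ≤ 2 := by rw [hcard]; exact hdeg
  have hcases : E.card = 0 ∨ E.card = 1 ∨ E.card = 2 := by omega
  rcases hcases with h0 | h1 | h2
  · -- degree 0 : x is interior to a unique edge
    have hE : E = ∅ := Finset.card_eq_zero.1 h0
    have hend : ∀ j b, G.edge j (cond b i1 i0) ≠ x := by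
      intro j b he
      have : (j, b) ∈ E := (hmem (j, b)).2 he
      rw [hE] at this; exact absurd this (Finset.notMem_empty _)
    have hx' : x ∈ ⋃ j, Set.range (G.edge j) := by rw [G.cover]; trivial
    obtain ⟨j0, hj0⟩ := Set.mem_iUnion.1 hx'
    obtain ⟨v0, hv0⟩ := hj0
    have hec : Continuous (G.edge j0) := (G.emb j0).continuous
    have hei : Function.Injective (G.edge j0) := (G.emb j0).injective
    have hv00 : 0 < v0.1 := by
      rcases lt_or_eq_of_le v0.2.1 with h | h
      · exact h
      · exact absurd (show G.edge j0 (cond false i1 i0) = x by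
          rw [show (cond false i1 i0 : I01) = i0 from rfl, show (i0:I01) = v0 from Subtype.ext h]; exact hv0) (hend j0 false)
    have hv01 : v0.1 < 1 := by
      rcases lt_or_eq_of_le v0.2.2 with h | h
      · exact h
      · exact absurd (show G.edge j0 (cond true i1 i0) = x by
          rw [show (cond true i1 i0 : I01) = i1 from rfl, show (i1:I01) = v0 from Subtype.ext h.symm]; exact hv0) (hend j0 true)
    have hv0i0 : v0 ≠ i0 := fun h => by rw [h] at hv00; norm_num [i0] at hv00
    have hv0i1 : v0 ≠ i1 := fun h => by rw [h] at hv01; norm_num [i1] at hv01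
    have hunique : ∀ j, j ≠ j0 → x ∉ Set.range (G.edge j) := by
      intro j hj hxj
      have := (G.meet j j0 hj x ⟨hxj, ⟨v0, hv0⟩⟩).2
      rcases this with h | h
      · exact hend j0 false (by rw [show (cond false i1 i0 : I01) = i0 from rfl]; exact h.symm)
      · exact hend j0 true (by rw [show (cond true i1 i0 : I01) = i1 from rfl]; exact h.symm)
    set ψ1 : I01 → X := G.edge j0 ∘ aff v0 i1 with hψ1def
    set ψ2 : I01 → X := G.edge j0 ∘ aff v0 i0 with hψ2def
    have hψ1c : Continuous ψ1 := hec.comp (aff_cont _ _)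
    have hψ2c : Continuous ψ2 := hec.comp (aff_cont _ _)
    have hψ1i : Function.Injective ψ1 := hei.comp (aff_inj hv0i1)
    have hψ2i : Function.Injective ψ2 := hei.comp (aff_inj hv0i0)
    have hψ10 : ψ1 i0 = x := by
      show G.edge j0 (aff v0 i1 i0) = x; rw [aff_zero]; exact hv0
    have hψ20 : ψ2 i0 = x := by
      show G.edge j0 (aff v0 i0 i0) = x; rw [aff_zero]; exact hv0
    have hint : Set.range ψ1 ∩ Set.range ψ2 ⊆ {x} := by
      rintro y ⟨⟨s, rfl⟩, ⟨s', he⟩⟩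
      have hpe : aff v0 i0 s' = aff v0 i1 s := hei he
      have hv := congrArg Subtype.val hpe
      rw [aff_val, aff_val] at hv
      simp only [i0, i1] at hv
      have h1 : s.1 * (1 - v0.1) = 0 := by nlinarith [mul_nonneg s'.2.1 hv00.le, mul_nonneg s.2.1 (by linarith : (0:ℝ) ≤ 1 - v0.1)]
      have hs0 : s = i0 := by
        apply Subtype.ext
        have : s.1 = 0 := by
          rcases mul_eq_zero.1 h1 with h | h
          · exact h
          · linarith
        simpa [i0] using this
      show ψ1 s ∈ ({x} : Set X)
      rw [hs0, hψ10]
      exact Set.mem_singleton _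
    refine two_star_nbhd L hLc hLi hσ0 hσ1 ψ1 ψ2 hψ1c hψ1i hψ2c hψ2i hψ10 hψ20 hint ?_
    intro c1 c2 hc1 hc2
    apply nbhd_pattern G x
    intro j
    by_cases hj : j = j0
    · subst hj
      refine ⟨G.edge j '' {w : I01 | w.1 ≤ (aff v0 i0 c2).1 ∨ (aff v0 i1 c1).1 ≤ w.1}, ?_, ?_, ?_⟩
      · apply image_closed _ hec
        exact IsClosed.union (isClosed_le continuous_subtype_val continuous_const)
          (isClosed_le continuous_const continuous_subtype_val)
      · rintro ⟨w, hw, hwe⟩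
        rw [← hv0] at hwe
        have hwv : w = v0 := hei hwe
        rw [hwv] at hw
        have hc1' : 0 < c1.1 := i0_lt_val hc1
        have hc2' : 0 < c2.1 := i0_lt_val hc2
        rcases hw with hw | hw
        · rw [aff_val] at hw; simp only [i0] at hw; nlinarith
        · rw [aff_val] at hw; simp only [i1] at hw; nlinarith
      · rintro y ⟨⟨w, rfl⟩, hyC⟩
        have hw : (aff v0 i0 c2).1 < w.1 ∧ w.1 < (aff v0 i1 c1).1 := by
          by_contra hcon
          apply hyC
          refine ⟨w, ?_, rfl⟩
          simp only [Set.mem_setOf_eq]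
          by_contra hcon2
          push_neg at hcon2
          exact hcon hcon2
        obtain ⟨hwlo, hwhi⟩ := hw
        rw [aff_val] at hwlo hwhi
        simp only [i0, i1] at hwlo hwhi
        by_cases hwv : v0.1 ≤ w.1
        · left
          have h1v : (0:ℝ) < 1 - v0.1 := by linarith
          have hs : (w.1 - v0.1) / (1 - v0.1) ∈ Set.Icc (0:ℝ) 1 := by
            constructor
            · exact div_nonneg (by linarith) h1v.le
            · rw [div_le_one h1v]; linarith [w.2.2]
          refine ⟨⟨(w.1 - v0.1) / (1 - v0.1), hs⟩, ⟨i0_le _, ?_⟩, ?_⟩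
          · show (w.1 - v0.1) / (1 - v0.1) ≤ c1.1
            rw [div_le_iff₀ h1v]
            nlinarith
          · show G.edge j (aff v0 i1 _) = G.edge j w
            congr 1
            apply Subtype.ext
            rw [aff_val]
            show v0.1 + (w.1 - v0.1) / (1 - v0.1) * ((1:ℝ) - v0.1) = w.1
            field_simp
            ring
        · right
          push_neg at hwv
          have hs : (v0.1 - w.1) / v0.1 ∈ Set.Icc (0:ℝ) 1 := by
            constructor
            · exact div_nonneg (by linarith) hv00.le
            · rw [div_le_one hv00]; linarith [w.2.1]
          refine ⟨⟨(v0.1 - w.1) / v0.1, hs⟩, ⟨i0_le _, ?_⟩, ?_⟩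
          · show (v0.1 - w.1) / v0.1 ≤ c2.1
            rw [div_le_iff₀ hv00]
            nlinarith
          · show G.edge j (aff v0 i0 _) = G.edge j w
            congr 1
            apply Subtype.ext
            rw [aff_val]
            show v0.1 + (v0.1 - w.1) / v0.1 * ((0:ℝ) - v0.1) = w.1
            field_simp
            ring
    · refine ⟨Set.range (G.edge j), ?_, hunique j hj, ?_⟩
      · rw [← Set.image_univ]; exact image_closed _ (G.emb j).continuous isClosed_univ
      · intro y hy; exact absurd hy.1 hy.2
  · -- degree 1 : impossible
    obtain ⟨e1, hE⟩ := Finset.card_eq_one.1 h1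
    have he1 : G.edge e1.1 (cond e1.2 i1 i0) = x := by
      have : e1 ∈ E := by rw [hE]; exact Finset.mem_singleton_self _
      exact (hmem e1).1 this
    obtain ⟨ψ1, hψ1c, hψ1i, hψ10, hψ1r, hψ1e, _⟩ := end_star G e1.1 e1.2 x he1
    have hxr : x ∈ Set.range (G.edge e1.1) := ⟨cond e1.2 i1 i0, he1⟩
    have hT : Set.range ψ1 ∈ nhds x := by
      apply nbhd_pattern G x
      intro j
      by_cases hj : j = e1.1
      · subst hj
        obtain ⟨C, hCc, hCx, hCT⟩ := hψ1e i1 (by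
          rw [show ((i0:I01) < i1) ↔ ((0:ℝ) < 1) from Iff.rfl]; norm_num)
        exact ⟨C, hCc, hCx, fun y hy => by
          have := hCT hy; rwa [range_eq_image_Icc] at this⟩
      · refine ⟨Set.range (G.edge j), ?_, ?_, ?_⟩
        · rw [← Set.image_univ]; exact image_closed _ (G.emb j).continuous isClosed_univ
        · intro hxj
          have := (G.meet j e1.1 hj x ⟨hxj, hxr⟩).1
          rcases this with h | h
          · have : (j, false) ∈ E := (hmem (j, false)).2 (by
              rw [show (cond false i1 i0 : I01) = i0 from rfl]; exact h.symm)
            rw [hE, Finset.mem_singleton] at this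
            exact hj (congrArg Prod.fst this)
          · have : (j, true) ∈ E := (hmem (j, true)).2 (by
              rw [show (cond true i1 i0 : I01) = i1 from rfl]; exact h.symm)
            rw [hE, Finset.mem_singleton] at this
            exact hj (congrArg Prod.fst this)
        · intro y hy; exact absurd hy.1 hy.2
    obtain ⟨a', b', ha', hb', hsub1, hsub2⟩ := interval_in_nbhd L hLc hσ0 hσ1 hT
    exact absurd (one_side L hLc hLi ha' hb' ψ1 hψ1c hψ1i (by rw [hψ10]) hsub1 hsub2) not_false
  · -- degree 2
    obtain ⟨e1, e2, he12, hE⟩ := Finset.card_eq_two.1 h2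
    have he1 : G.edge e1.1 (cond e1.2 i1 i0) = x := (hmem e1).1 (by
      rw [hE]; exact Finset.mem_insert_self _ _)
    have he2 : G.edge e2.1 (cond e2.2 i1 i0) = x := (hmem e2).1 (by
      rw [hE]; exact Finset.mem_insert_of_mem (Finset.mem_singleton_self _))
    have hj12 : e1.1 ≠ e2.1 := by
      intro hj
      have hb : e1.2 ≠ e2.2 := by
        intro hb; exact he12 (Prod.ext hj hb)
      have : G.edge e1.1 i0 = G.edge e1.1 i1 := by
        cases hb1 : e1.2 <;> cases hb2 : e2.2 <;> simp [hb1, hb2] at hb ⊢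
        · rw [hb1] at he1; rw [hb2] at he2
          simp only [cond] at he1 he2
          rw [he1, hj, he2]
        · rw [hb1] at he1; rw [hb2] at he2
          simp only [cond] at he1 he2
          rw [hj, he2, ← he1, hj]
      have := (G.emb e1.1).injective this
      have hv := congrArg Subtype.val this
      norm_num [i0, i1] at hv
    obtain ⟨ψ1, hψ1c, hψ1i, hψ10, hψ1r, hψ1e, hψ1end⟩ := end_star G e1.1 e1.2 x he1
    obtain ⟨ψ2, hψ2c, hψ2i, hψ20, hψ2r, hψ2e, hψ2end⟩ := end_star G e2.1 e2.2 x he2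
    have hint : Set.range ψ1 ∩ Set.range ψ2 ⊆ {x} := by
      rintro y ⟨hy1, hy2⟩
      have hmeet := G.meet e1.1 e2.1 hj12 y ⟨hψ1r hy1, hψ2r hy2⟩
      exact hψ1end y hy1 hmeet.1
    refine two_star_nbhd L hLc hLi hσ0 hσ1 ψ1 ψ2 hψ1c hψ1i hψ2c hψ2i
      (by rw [hψ10]) (by rw [hψ20]) hint ?_
    intro c1 c2 hc1 hc2
    apply nbhd_pattern G x
    intro j
    by_cases hj1 : j = e1.1
    · subst hj1
      obtain ⟨C, hCc, hCx, hCT⟩ := hψ1e c1 hc1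
      exact ⟨C, hCc, hCx, fun y hy => Set.mem_union_left _ (hCT hy)⟩
    · by_cases hj2 : j = e2.1
      · subst hj2
        obtain ⟨C, hCc, hCx, hCT⟩ := hψ2e c2 hc2
        exact ⟨C, hCc, hCx, fun y hy => Set.mem_union_right _ (hCT hy)⟩
      · refine ⟨Set.range (G.edge j), ?_, ?_, ?_⟩
        · rw [← Set.image_univ]; exact image_closed _ (G.emb j).continuous isClosed_univ
        · intro hxj
          have hxr : x ∈ Set.range (G.edge e1.1) := ⟨cond e1.2 i1 i0, he1⟩
          have := (G.meet j e1.1 hj1 x ⟨hxj, hxr⟩).1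
          have hmem' : ∀ b, G.edge j (cond b i1 i0) = x → False := by
            intro b hb
            have : (j, b) ∈ E := (hmem (j, b)).2 hb
            rw [hE] at this
            rcases Finset.mem_insert.1 this with h | h
            · exact hj1 (congrArg Prod.fst h)
            · rw [Finset.mem_singleton] at h
              exact hj2 (congrArg Prod.fst h)
          rcases this with h | h
          · exact hmem' false h.symm
          · exact hmem' true h.symm
        · intro y hy; exact absurd hy.1 hy.2


lemma ne_i0_pos {a : I01} (h : a ≠ i0) : 0 < a.1 := by
  rcases lt_or_eq_of_le a.2.1 with h' | h'
  · exact h'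
  · exact absurd (Subtype.ext h'.symm) h

lemma ne_i1_lt {a : I01} (h : a ≠ i1) : a.1 < 1 := by
  rcases lt_or_eq_of_le a.2.2 with h' | h'
  · exact h'
  · exact absurd (Subtype.ext h') h

/-- The separation property of a leg with no branch points off `q`. -/
lemma leg_sep (G : TopGraph X) (Lg : I01 → X) (hc : Continuous Lg)
    (hi : Function.Injective Lg) (q : X) (hq : Lg i0 = q)
    (hnob : ∀ x ∈ Set.range Lg, x ≠ q → ¬ G.IsBranchPoint x)
    (tt : I01) (ht0 : tt ≠ i0) (ht1 : tt ≠ i1) :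
    ∀ S : Set X, IsPreconnected S → Lg tt ∈ S → q ∉ S → Lg i1 ∉ S →
      S ⊆ Set.range Lg := by
  have hK : ∀ σ : I01, σ ≠ i0 → σ ≠ i1 → Set.range Lg ∈ nhds (Lg σ) := by
    intro σ h0 h1
    have hne : Lg σ ≠ q := by
      intro he; rw [← hq] at he; exact h0 (hi he)
    have hdeg : G.degree (Lg σ) ≤ 2 := by
      have := hnob (Lg σ) ⟨σ, rfl⟩ hne
      unfold TopGraph.IsBranchPoint at this
      omega
    exact local_main G Lg hc hi (ne_i0_pos h0) (ne_i1_lt h1) hdeg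
  intro S hS hpS hqS haS
  set u := interior (Set.range Lg) ∩ ({q}ᶜ ∩ ({Lg i1})ᶜ) with hudef
  set v := (Set.range Lg)ᶜ with hvdef
  have hu : IsOpen u :=
    isOpen_interior.inter ((isClosed_singleton.isOpen_compl).inter
      isClosed_singleton.isOpen_compl)
  have hv : IsOpen v := (((isCompact_range hc)).isClosed).isOpen_compl
  have hdisj : Disjoint u v := by
    rw [Set.disjoint_left]
    intro y hy hyv
    exact hyv (interior_subset hy.1)
  have hcov : S ⊆ u ∪ v := by
    intro y hy
    by_cases hyr : y ∈ Set.range Lg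
    · left
      obtain ⟨σ, rfl⟩ := hyr
      have h0 : σ ≠ i0 := by
        intro he; rw [he, hq] at hy; exact hqS hy
      have h1 : σ ≠ i1 := by
        intro he; rw [he] at hy; exact haS hy
      refine ⟨mem_interior_iff_mem_nhds.2 (hK σ h0 h1), ?_, ?_⟩
      · intro he
        rw [Set.mem_singleton_iff] at he
        rw [he] at hy; exact hqS hy
      · intro he
        rw [Set.mem_singleton_iff] at he
        rw [he] at hy; exact haS hy
    · right; exact hyr
  have hne : (S ∩ u).Nonempty := by
    refine ⟨Lg tt, hpS, mem_interior_iff_mem_nhds.2 (hK tt ht0 ht1), ?_, ?_⟩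
    · intro he
      rw [Set.mem_singleton_iff] at he
      rw [he] at hpS; exact hqS hpS
    · intro he
      rw [Set.mem_singleton_iff] at he
      exact ht1 (hi (he.trans rfl))
  have := hS.subset_left_of_subset_union hu hv hdisj hcov hne
  exact this.trans (Set.inter_subset_left.trans interior_subset)

lemma sort3 {β : Type*} [LinearOrder β] (f : Fin 3 → β)
    (h : ∀ i j : Fin 3, i ≠ j → f i ≠ f j) :
    ∃ a b c : Fin 3, a ≠ b ∧ a ≠ c ∧ b ≠ c ∧ f a < f b ∧ f b < f c := by
  rcases lt_or_gt_of_ne (h 0 1 (by decide)) with a | a <;>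
    rcases lt_or_gt_of_ne (h 0 2 (by decide)) with b | b <;>
      rcases lt_or_gt_of_ne (h 1 2 (by decide)) with c | c
  · exact ⟨0, 1, 2, by decide, by decide, by decide, a, c⟩
  · exact ⟨0, 2, 1, by decide, by decide, by decide, b, c⟩
  · exact absurd (c.trans b) (not_lt.2 a.le)
  · exact ⟨2, 0, 1, by decide, by decide, by decide, b, a⟩
  · exact ⟨1, 0, 2, by decide, by decide, by decide, a, b⟩
  · exact absurd (b.trans c) (not_lt.2 a.le)
  · exact ⟨1, 2, 0, by decide, by decide, by decide, c, b⟩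
  · exact ⟨2, 1, 0, by decide, by decide, by decide, c, a⟩

/-- The main one-sided argument: if the arc meets `q` after `p_b`, its start lies
on `[q, p_a]`. -/
lemma core2 (q : X) (La Lb : I01 → X)
    (hca : Continuous La) (hia : Function.Injective La)
    (hcb : Continuous Lb) (hib : Function.Injective Lb)
    (hqa : La i0 = q) (hqb : Lb i0 = q)
    (hab : Set.range La ∩ Set.range Lb ⊆ {q})
    (ta tb : I01) (hta0 : ta ≠ i0) (hta1 : ta ≠ i1) (htb0 : tb ≠ i0) (htb1 : tb ≠ i1)
    (sepa : ∀ S : Set X, IsPreconnected S → La ta ∈ S → q ∉ S → La i1 ∉ S →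
      S ⊆ Set.range La)
    (sepb : ∀ S : Set X, IsPreconnected S → Lb tb ∈ S → q ∉ S → Lb i1 ∉ S →
      S ⊆ Set.range Lb)
    (α : I01 → X) (hαc : Continuous α) (hαi : Function.Injective α)
    (sa sb w : I01) (hsa : α sa = La ta) (hsb : α sb = Lb tb) (hw : α w = q)
    (hab1 : sa < sb) (hbw : sb < w) :
    ∃ τ : I01, τ ≤ ta ∧ α i0 = La τ := by
  -- basic distinctness facts
  have hpa_q : La ta ≠ q := by
    intro he; rw [← hqa] at he; exact hta0 (hia he)
  have hpb_q : Lb tb ≠ q := by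
    intro he; rw [← hqb] at he; exact htb0 (hib he)
  have hpa_rb : La ta ∉ Set.range Lb := by
    intro hm; exact hpa_q (hab ⟨⟨ta, rfl⟩, hm⟩)
  have hab_q : Lb i1 ≠ q := by
    intro he; rw [← hqb] at he; exact (fun h => by
      have := congrArg Subtype.val h; norm_num [i0, i1] at this : (i1 : I01) ≠ i0) (hib he)
  have hab_ra : Lb i1 ∉ Set.range La := by
    intro hm; exact hab_q (hab ⟨hm, ⟨i1, rfl⟩⟩)
  have haa_q : La i1 ≠ q := by
    intro he; rw [← hqa] at he; exact (fun h => by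
      have := congrArg Subtype.val h; norm_num [i0, i1] at this : (i1 : I01) ≠ i0) (hia he)
  have hpa_ab : La ta ≠ Lb i1 := by
    intro he; exact hpa_rb (he ▸ ⟨i1, rfl⟩)
  have hpb_ab : Lb tb ≠ Lb i1 := fun he => htb1 (hib he)
  have hpa_aa : La ta ≠ La i1 := fun he => hta1 (hia he)
  have haa_ab : La i1 ≠ Lb i1 := by
    intro he; exact hab_ra (he ▸ ⟨i1, rfl⟩)
  have hαq : ∀ z : I01, α z = q → z = w := fun z hz => hαi (hz.trans hw.symm)
  -- (i) find u with α u = Lb i1 strictly between sa and sb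
  have hstep1 : ∃ u : I01, sa < u ∧ u < sb ∧ α u = Lb i1 := by
    have hS1 : IsPreconnected (α '' Set.Icc sa sb) := preconn_image_Icc α hαc _ _
    have hpb1 : Lb tb ∈ α '' Set.Icc sa sb := ⟨sb, ⟨hab1.le, le_refl _⟩, hsb⟩
    have hq1 : q ∉ α '' Set.Icc sa sb := by
      rintro ⟨z, hz, hzq⟩
      have := hαq z hzq
      rw [this] at hz
      exact absurd hz.2 (not_le.2 hbw)
    have hnot : ¬ (α '' Set.Icc sa sb ⊆ Set.range Lb) := by
      intro hsub
      exact hpa_rb (hsub ⟨sa, ⟨le_refl _, hab1.le⟩, hsa⟩)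
    have hmem : Lb i1 ∈ α '' Set.Icc sa sb := by
      by_contra hno
      exact hnot (sepb _ hS1 hpb1 hq1 hno)
    obtain ⟨u, hu, hue⟩ := hmem
    refine ⟨u, ?_, ?_, hue⟩
    · rcases lt_or_eq_of_le hu.1 with h | h
      · exact h
      · exfalso; rw [← h] at hue; rw [hsa] at hue; exact hpa_ab hue
    · rcases lt_or_eq_of_le hu.2 with h | h
      · exact h
      · exfalso; rw [h] at hue; rw [hsb] at hue; exact hpb_ab hue
  obtain ⟨u, hsau, husb, hu⟩ := hstep1
  -- (ii) find x1 with α x1 = La i1 strictly between sa and u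
  have hstep2 : ∃ x1 : I01, sa < x1 ∧ x1 < u ∧ α x1 = La i1 := by
    have hS2 : IsPreconnected (α '' Set.Icc sa u) := preconn_image_Icc α hαc _ _
    have hpa2 : La ta ∈ α '' Set.Icc sa u := ⟨sa, ⟨le_refl _, hsau.le⟩, hsa⟩
    have hq2 : q ∉ α '' Set.Icc sa u := by
      rintro ⟨z, hz, hzq⟩
      have := hαq z hzq
      rw [this] at hz
      exact absurd hz.2 (not_le.2 (husb.trans hbw))
    have hnot : ¬ (α '' Set.Icc sa u ⊆ Set.range La) := by
      intro hsub
      exact hab_ra (hsub ⟨u, ⟨hsau.le, le_refl _⟩, hu⟩)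
    have hmem : La i1 ∈ α '' Set.Icc sa u := by
      by_contra hno
      exact hnot (sepa _ hS2 hpa2 hq2 hno)
    obtain ⟨x1, hx1, hx1e⟩ := hmem
    refine ⟨x1, ?_, ?_, hx1e⟩
    · rcases lt_or_eq_of_le hx1.1 with h | h
      · exact h
      · exfalso; rw [← h] at hx1e; rw [hsa] at hx1e; exact hpa_aa hx1e
    · rcases lt_or_eq_of_le hx1.2 with h | h
      · exact h
      · exfalso; rw [h] at hx1e; rw [hu] at hx1e; exact haa_ab hx1e.symm
  obtain ⟨x1, hsax1, hx1u, hx1⟩ := hstep2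
  -- (iii) the initial piece of the arc lies in the leg a
  have hS3 : α '' Set.Icc i0 sa ⊆ Set.range La := by
    apply sepa _ (preconn_image_Icc α hαc _ _)
    · exact ⟨sa, ⟨i0_le _, le_refl _⟩, hsa⟩
    · rintro ⟨z, hz, hzq⟩
      have := hαq z hzq
      rw [this] at hz
      exact absurd hz.2 (not_le.2 (hab1.trans hbw))
    · rintro ⟨z, hz, hze⟩
      have : z = x1 := hαi (hze.trans hx1.symm)
      rw [this] at hz
      exact absurd hz.2 (not_le.2 hsax1)
  -- (iv) the piece from sa to x1 lies in leg a and covers [ta, 1]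
  have hS4 : α '' Set.Icc sa x1 ⊆ Set.range La := by
    have hS4' : α '' Set.Ico sa x1 ⊆ Set.range La := by
      apply sepa _ (preconn_image_Ico α hαc _ _)
      · exact ⟨sa, ⟨le_refl _, hsax1⟩, hsa⟩
      · rintro ⟨z, hz, hzq⟩
        have := hαq z hzq
        rw [this] at hz
        exact absurd (hz.2.trans (hx1u.trans (husb.trans hbw))) (lt_irrefl _)
      · rintro ⟨z, hz, hze⟩
        have : z = x1 := hαi (hze.trans hx1.symm)
        rw [this] at hz
        exact absurd hz.2 (lt_irrefl _)
    rintro y ⟨z, hz, rfl⟩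
    rcases lt_or_eq_of_le hz.2 with h | h
    · exact hS4' ⟨z, ⟨hz.1, h⟩, rfl⟩
    · rw [h, hx1]; exact ⟨i1, rfl⟩
  have hcover : ∀ m : I01, ta ≤ m → La m ∈ α '' Set.Icc sa x1 := by
    intro m hm
    exact conn_between La hca hia (preconn_image_Icc α hαc _ _) hS4
      (by rw [← hsa]; exact ⟨sa, ⟨le_refl _, hsax1.le⟩, rfl⟩)
      (by rw [← hx1]; exact ⟨x1, ⟨hsax1.le, le_refl _⟩, rfl⟩) m hm (le_i1 m)
  -- (v) conclude
  have h0m : α i0 ∈ Set.range La := hS3 ⟨i0, ⟨le_refl _, i0_le _⟩, rfl⟩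
  obtain ⟨τ, hτ⟩ := h0m
  refine ⟨τ, ?_, hτ.symm⟩
  by_contra hno
  push_neg at hno
  obtain ⟨z, hz, hze⟩ := hcover τ hno.le
  have hzi0 : z = i0 := hαi (hze.trans hτ)
  rw [hzi0] at hz
  have hsai0 : sa = i0 := le_antisymm hz.1 (i0_le _)
  have : α sa = La τ := by rw [hsai0, ← hze, hzi0]
  rw [hsa] at this
  exact absurd (hia this) (ne_of_lt hno)


end Triod

open Triod

/-- If a finite graph `G` contains a simple triod `L₁ ∪ L₂ ∪ L₃` with common point `q`,
whose legs contain no branch points of `G` off `q`, and `pᵢ` is interior to `Lᵢ`,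
then any arc in `G` through `p₁, p₂, p₃` contains `q` in its interior and has an
endpoint on `[q,p₁] ∪ [q,p₂] ∪ [q,p₃]`. -/
theorem triod_arc_lemma {X : Type*} [TopologicalSpace X] [T2Space X] [ConnectedSpace X]
    (G : TopGraph X) (q : X) (L : Fin 3 → Set.Icc (0:ℝ) 1 → X)
    (hemb : ∀ i, Topology.IsEmbedding (L i)) (hq : ∀ i, L i i0 = q)
    (hmeet : ∀ i j, i ≠ j → Set.range (L i) ∩ Set.range (L j) = {q})
    (hnob : ∀ i, ∀ x ∈ Set.range (L i), x ≠ q → ¬ G.IsBranchPoint x)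
    (t : Fin 3 → Set.Icc (0:ℝ) 1) (ht : ∀ i, t i ≠ i0 ∧ t i ≠ i1)
    (p : Fin 3 → X) (hp : ∀ i, p i = L i (t i))
    (α : Set.Icc (0:ℝ) 1 → X) (hα : Topology.IsEmbedding α)
    (hpα : ∀ i, p i ∈ Set.range α) :
    (∃ s : Set.Icc (0:ℝ) 1, s ≠ i0 ∧ s ≠ i1 ∧ α s = q) ∧
      (α i0 ∈ ⋃ i, L i '' {s | s ≤ t i} ∨ α i1 ∈ ⋃ i, L i '' {s | s ≤ t i}) := by
  classical
  have hLc : ∀ i, Continuous (L i) := fun i => (hemb i).continuous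
  have hLi : ∀ i, Function.Injective (L i) := fun i => (hemb i).injective
  have hαc : Continuous α := hα.continuous
  have hαi : Function.Injective α := hα.injective
  have sep : ∀ i, ∀ S : Set X, IsPreconnected S → L i (t i) ∈ S → q ∉ S →
      L i i1 ∉ S → S ⊆ Set.range (L i) := fun i =>
    leg_sep G (L i) (hLc i) (hLi i) q (hq i) (hnob i) (t i) (ht i).1 (ht i).2
  have hsub : ∀ i j, i ≠ j → Set.range (L i) ∩ Set.range (L j) ⊆ {q} :=
    fun i j hij => (hmeet i j hij).subset
  have hs0 : ∀ i, ∃ z : I01, α z = p i := fun i => hpα i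
  choose s hs using hs0
  have hp' : ∀ i, α (s i) = L i (t i) := fun i => (hs i).trans (hp i)
  have hpq : ∀ i, L i (t i) ≠ q := by
    intro i he
    rw [← hq i] at he
    exact (ht i).1 (hLi i he)
  have hpne : ∀ i j, i ≠ j → L i (t i) ≠ L j (t j) := by
    intro i j hij he
    exact hpq i (hsub i j hij ⟨⟨t i, rfl⟩, he ▸ ⟨t j, rfl⟩⟩)
  have hsne : ∀ i j, i ≠ j → s i ≠ s j := fun i j hij he =>
    hpne i j hij (by rw [← hp' i, ← hp' j, he])
  obtain ⟨a, b, c, hab', hac', hbc', hab1, hbc1⟩ := sort3 s hsne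
  -- p_i is never q nor the far endpoint of leg b
  have hp_ne_ab : ∀ i, L i (t i) ≠ L b i1 := by
    intro i he
    by_cases hib : i = b
    · subst hib; exact (ht i).2 (hLi i he)
    · apply hpq i
      exact hsub i b hib ⟨⟨t i, rfl⟩, he ▸ ⟨i1, rfl⟩⟩
  have hpa_nrb : L a (t a) ∉ Set.range (L b) := by
    intro hm; exact hpq a (hsub a b hab' ⟨⟨t a, rfl⟩, hm⟩)
  have hpc_nrb : L c (t c) ∉ Set.range (L b) := by
    intro hm; exact hpq c (hsub c b (Ne.symm hbc') ⟨⟨t c, rfl⟩, hm⟩)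
  -- exit point finder for the middle leg
  have hexit : ∀ z1 z2 : I01, z1 ≤ z2 → L b (t b) ∈ α '' Set.Icc z1 z2 →
      (∃ zo ∈ Set.Icc z1 z2, α zo ∉ Set.range (L b)) →
      ∃ u ∈ Set.Icc z1 z2, (α u = q ∨ α u = L b i1) := by
    intro z1 z2 hz12 hpbm ⟨zo, hzo, hzor⟩
    by_cases hqm : q ∈ α '' Set.Icc z1 z2
    · obtain ⟨u, hu, hue⟩ := hqm
      exact ⟨u, hu, Or.inl hue⟩
    · by_cases habm : L b i1 ∈ α '' Set.Icc z1 z2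
      · obtain ⟨u, hu, hue⟩ := habm
        exact ⟨u, hu, Or.inr hue⟩
      · exfalso
        exact hzor (sep b _ (preconn_image_Icc α hαc _ _) hpbm hqm habm ⟨zo, hzo, rfl⟩)
  have hu' := hexit (s a) (s b) hab1.le ⟨s b, ⟨hab1.le, le_refl _⟩, hp' b⟩
    ⟨s a, ⟨le_refl _, hab1.le⟩, by rw [hp' a]; exact hpa_nrb⟩
  have hv' := hexit (s b) (s c) hbc1.le ⟨s b, ⟨le_refl _, hbc1.le⟩, hp' b⟩
    ⟨s c, ⟨hbc1.le, le_refl _⟩, by rw [hp' c]; exact hpc_nrb⟩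
  obtain ⟨u, huI, hue⟩ := hu'
  obtain ⟨v, hvI, hve⟩ := hv'
  have hnotqab : ∀ i, ¬ (L i (t i) = q ∨ L i (t i) = L b i1) := by
    intro i h
    rcases h with h | h
    · exact hpq i h
    · exact hp_ne_ab i h
  have hu_ne1 : u ≠ s a := by
    intro he; rw [he, hp' a] at hue; exact hnotqab a hue
  have hu_ne2 : u ≠ s b := by
    intro he; rw [he, hp' b] at hue; exact hnotqab b hue
  have hv_ne1 : v ≠ s b := by
    intro he; rw [he, hp' b] at hve; exact hnotqab b hve
  have hv_ne2 : v ≠ s c := by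
    intro he; rw [he, hp' c] at hve; exact hnotqab c hve
  have hau : s a < u := lt_of_le_of_ne huI.1 (Ne.symm hu_ne1)
  have hub : u < s b := lt_of_le_of_ne huI.2 hu_ne2
  have hbv : s b < v := lt_of_le_of_ne hvI.1 (Ne.symm hv_ne1)
  have hvc : v < s c := lt_of_le_of_ne hvI.2 hv_ne2
  -- the reversal map
  set r : I01 → I01 := fun z => ⟨1 - z.1, by
    constructor
    · linarith [z.2.2]
    · linarith [z.2.1]⟩ with hrdef
  have hrc : Continuous r :=
    Continuous.subtype_mk (continuous_const.sub continuous_subtype_val) _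
  have hri : Function.Injective r := by
    intro z z' he
    have := congrArg Subtype.val he
    simp only [hrdef] at this
    exact Subtype.ext (by linarith)
  have hrr : ∀ z, r (r z) = z := by
    intro z; apply Subtype.ext; simp [hrdef]
  have hrlt : ∀ {z z' : I01}, z < z' → r z' < r z := by
    intro z z' h
    show (1:ℝ) - z'.1 < 1 - z.1
    have : z.1 < z'.1 := h
    linarith
  have hri0 : r i0 = i1 := by apply Subtype.ext; simp [hrdef, i0, i1]
  rcases hue with huq | huab
  · -- q is at u, before s b : use the reversed arc
    have hwne0 : u ≠ i0 := by
      intro he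
      have : i0 < u := lt_of_le_of_lt (i0_le (s a)) hau
      rw [he] at this
      exact lt_irrefl _ this
    have hwne1 : u ≠ i1 := by
      intro he
      have : u < i1 := lt_of_lt_of_le (hub.trans hbc1) (le_i1 _)
      rw [he] at this
      exact lt_irrefl _ this
    refine ⟨⟨u, hwne0, hwne1, huq⟩, Or.inr ?_⟩
    have hcore := core2 q (L c) (L b) (hLc c) (hLi c) (hLc b) (hLi b) (hq c) (hq b)
      (hsub c b (Ne.symm hbc')) (t c) (t b) (ht c).1 (ht c).2 (ht b).1 (ht b).2
      (sep c) (sep b) (α ∘ r) (hαc.comp hrc) (hαi.comp hri)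
      (r (s c)) (r (s b)) (r u)
      (by show α (r (r (s c))) = L c (t c); rw [hrr]; exact hp' c)
      (by show α (r (r (s b))) = L b (t b); rw [hrr]; exact hp' b)
      (by show α (r (r u)) = q; rw [hrr]; exact huq)
      (hrlt hbc1) (hrlt (hub))
    obtain ⟨τ, hτ, he⟩ := hcore
    have he' : α i1 = L c τ := by
      rw [← hri0]; exact he
    exact Set.mem_iUnion.2 ⟨c, ⟨τ, hτ, he'.symm⟩⟩
  · rcases hve with hvq | hvab
    · -- q is at v, after s b : forward argument
      have hwne0 : v ≠ i0 := by
        intro he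
        have : i0 < v := lt_of_le_of_lt (i0_le (s a)) (hab1.trans hbv)
        rw [he] at this
        exact lt_irrefl _ this
      have hwne1 : v ≠ i1 := by
        intro he
        have : v < i1 := lt_of_lt_of_le hvc (le_i1 _)
        rw [he] at this
        exact lt_irrefl _ this
      refine ⟨⟨v, hwne0, hwne1, hvq⟩, Or.inl ?_⟩
      have hcore := core2 q (L a) (L b) (hLc a) (hLi a) (hLc b) (hLi b) (hq a) (hq b)
        (hsub a b hab') (t a) (t b) (ht a).1 (ht a).2 (ht b).1 (ht b).2
        (sep a) (sep b) α hαc hαi (s a) (s b) v (hp' a) (hp' b) hvq hab1 hbv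
      obtain ⟨τ, hτ, he⟩ := hcore
      exact Set.mem_iUnion.2 ⟨a, ⟨τ, hτ, he.symm⟩⟩
    · -- both exits are the far endpoint of leg b : contradicts injectivity
      exfalso
      have : u = v := hαi (huab.trans hvab.symm)
      rw [this] at hub
      exact lt_irrefl _ (hub.trans hbv)
end

section
/- If a finite graph G is 5-arc connected, then G has no branch point of degree 5 or more. -/
open Set Topology

open Classical
set_option linter.unusedSectionVars false

namespace FiveAC

noncomputable def bEnd : Bool → Set.Icc (0:ℝ) 1
  | false => i0
  | true => i1

noncomputable def bPt : Bool → Set.Icc (0:ℝ) 1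
  | false => ⟨1/4, by norm_num⟩
  | true => ⟨3/4, by norm_num⟩

noncomputable def midPt : Set.Icc (0:ℝ) 1 := ⟨1/2, by norm_num⟩

def halfSet : Bool → Set (Set.Icc (0:ℝ) 1)
  | false => {s | 0 < (s:ℝ) ∧ (s:ℝ) < 1/2}
  | true => {s | 1/2 < (s:ℝ) ∧ (s:ℝ) < 1}

def closedHalf : Bool → Set (Set.Icc (0:ℝ) 1)
  | false => {s | (s:ℝ) ≤ 1/2}
  | true => {s | 1/2 ≤ (s:ℝ)}

lemma halfSet_subset (b : Bool) : halfSet b ⊆ closedHalf b := by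
  cases b <;> intro s hs
  · exact hs.2.le
  · exact hs.1.le

lemma mem_halfSet_val {s : Set.Icc (0:ℝ) 1} {b : Bool} (h : s ∈ halfSet b) :
    0 < (s:ℝ) ∧ (s:ℝ) < 1 ∧ (s:ℝ) ≠ 1/2 := by
  cases b
  · exact ⟨h.1, by have := s.2.2; constructor <;> [linarith [h.2]; exact ne_of_lt h.2]⟩
  · exact ⟨by have := s.2.1; linarith [h.1], h.2, ne_of_gt h.1⟩

lemma i0_not_mem (b : Bool) : i0 ∉ halfSet b := fun h => by
  have := (mem_halfSet_val h).1; simp [i0] at this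

lemma i1_not_mem (b : Bool) : i1 ∉ halfSet b := fun h => by
  have := (mem_halfSet_val h).2.1; simp [i1] at this

lemma bEnd_not_mem (b c : Bool) : bEnd b ∉ halfSet c := by
  cases b
  · exact i0_not_mem c
  · exact i1_not_mem c

lemma midPt_not_mem (b : Bool) : midPt ∉ halfSet b := fun h => by
  have := (mem_halfSet_val h).2.2; simp [midPt] at this

lemma bPt_mem_halfSet (b : Bool) : bPt b ∈ halfSet b := by
  cases b <;> constructor <;> norm_num [bPt]

variable {X : Type*} [TopologicalSpace X] [T2Space X] (G : TopGraph X)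

lemma edge_inj (i : Fin G.n) : Function.Injective (G.edge i) := (G.emb i).injective

def leg (i : Fin G.n) (b : Bool) : Set X := G.edge i '' halfSet b

lemma image_closedHalf_isClosed (i : Fin G.n) (b : Bool) :
    IsClosed (G.edge i '' closedHalf b) := by
  have hcl : IsClosed (closedHalf b) := by
    cases b
    · exact IsClosed.preimage continuous_subtype_val isClosed_Iic
    · exact IsClosed.preimage continuous_subtype_val isClosed_Ici
  exact ((hcl.isCompact).image (G.emb i).continuous).isClosed

lemma leg_open (i : Fin G.n) (b : Bool) : IsOpen (leg G i b) := by
  rw [← isClosed_compl_iff]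
  have hC : (leg G i b)ᶜ =
      ⋃ j, if j = i then G.edge i '' (halfSet b)ᶜ else Set.range (G.edge j) := by
    ext y
    constructor
    · intro hy
      have hy' : y ∈ ⋃ j, Set.range (G.edge j) := by rw [G.cover]; trivial
      obtain ⟨j, t, rfl⟩ := mem_iUnion.mp hy'
      by_cases hj : j = i
      · subst hj
        refine mem_iUnion.mpr ⟨j, ?_⟩
        simp only [if_pos rfl]
        exact ⟨t, fun ht => hy ⟨t, ht, rfl⟩, rfl⟩
      · exact mem_iUnion.mpr ⟨j, by simp only [if_neg hj]; exact mem_range_self t⟩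
    · intro hy hleg
      obtain ⟨j, hj⟩ := mem_iUnion.mp hy
      obtain ⟨t, ht, rfl⟩ := hleg
      by_cases hji : j = i
      · subst hji
        simp only [if_pos rfl] at hj
        obtain ⟨u, hu, he⟩ := hj
        exact hu (edge_inj G j he ▸ ht)
      · simp only [if_neg hji] at hj
        have hm := G.meet i j (fun e => hji e.symm) _ ⟨mem_range_self t, hj⟩
        rcases hm.1 with he | he
        · exact i0_not_mem b (edge_inj G i he ▸ ht)
        · exact i1_not_mem b (edge_inj G i he ▸ ht)
  rw [hC]
  refine isClosed_iUnion_of_finite fun j => ?_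
  split
  · next hji =>
    subst hji
    have : (halfSet b)ᶜ ⊆ closedHalf b ∨ True := Or.inr trivial
    have hcl : IsClosed ((halfSet b)ᶜ) := by
      have : IsOpen (halfSet b) := by
        cases b
        · exact IsOpen.preimage continuous_subtype_val isOpen_Ioo
        · exact IsOpen.preimage continuous_subtype_val isOpen_Ioo
      exact this.isClosed_compl
    exact ((hcl.isCompact).image (G.emb j).continuous).isClosed
  · exact (isCompact_range (G.emb j).continuous).isClosed

lemma leg_closure_cases (i : Fin G.n) (b : Bool) {y : X} (hy : y ∈ closure (leg G i b)) :
    y ∈ leg G i b ∨ y = G.edge i (bEnd b) ∨ y = G.edge i midPt := by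
  have h1 : closure (leg G i b) ⊆ G.edge i '' closedHalf b :=
    closure_minimal (image_mono (f := G.edge i) (halfSet_subset b)) (image_closedHalf_isClosed G i b)
  obtain ⟨t, ht, rfl⟩ := h1 hy
  cases b
  · have ht' : (t:ℝ) ≤ 1/2 := ht
    rcases eq_or_lt_of_le t.2.1 with h0 | h0
    · exact Or.inr (Or.inl (congrArg (G.edge i) (Subtype.ext h0.symm)))
    · rcases lt_or_eq_of_le ht' with hh | hh
      · exact Or.inl ⟨t, ⟨h0, hh⟩, rfl⟩
      · exact Or.inr (Or.inr (congrArg (G.edge i) (Subtype.ext hh)))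
  · have ht' : 1/2 ≤ (t:ℝ) := ht
    rcases lt_or_eq_of_le t.2.2 with h1' | h1'
    · rcases lt_or_eq_of_le ht' with hh | hh
      · exact Or.inl ⟨t, ⟨hh, h1'⟩, rfl⟩
      · exact Or.inr (Or.inr (congrArg (G.edge i) (Subtype.ext hh.symm)))
    · exact Or.inr (Or.inl (congrArg (G.edge i) (Subtype.ext h1')))

lemma leg_disjoint {i j : Fin G.n} {b c : Bool} (hne : (i, b) ≠ (j, c)) {y : X}
    (h1 : y ∈ leg G i b) (h2 : y ∈ leg G j c) : False := by
  obtain ⟨t, ht, rfl⟩ := h1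
  obtain ⟨u, hu, he⟩ := h2
  by_cases hij : i = j
  · subst hij
    have htu : u = t := edge_inj G i he
    subst htu
    have hbc : b ≠ c := fun h => hne (by rw [h])
    cases b <;> cases c
    · exact hbc rfl
    · exact absurd hu.1 (by linarith [ht.2])
    · exact absurd ht.1 (by linarith [hu.2])
    · exact hbc rfl
  · have hm := G.meet i j hij _ ⟨mem_range_self t, ⟨u, he⟩⟩
    rcases hm.1 with h | h
    · exact i0_not_mem b (edge_inj G i h ▸ ht)
    · exact i1_not_mem b (edge_inj G i h ▸ ht)

end FiveAC


open FiveAC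

/-- A `5`-arc connected finite graph has no branch point of degree `5` or more. -/
theorem five_ac_no_degree_five {X : Type*} [TopologicalSpace X] [T2Space X]
    [ConnectedSpace X] (G : TopGraph X) (h : NArcConnected X 5) :
    ∀ x : X, ¬ (5 ≤ G.degree x) := by
  intro x hx
  classical
  -- Step 1: extract 5 distinct edge-germs at x
  set S : Finset (Fin G.n × Bool) :=
    Finset.univ.filter (fun q => G.edge q.1 (bEnd q.2) = x) with hSdef
  have hdeg : G.degree x = S.card := by
    rw [hSdef, Finset.card_filter, TopGraph.degree, Fintype.sum_prod_type]
    refine Finset.sum_congr rfl fun i _ => ?_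
    rw [Fintype.sum_bool]
    simp only [bEnd]
    exact add_comm _ _
  have hcard : 5 ≤ S.card := hdeg ▸ hx
  have hlen : 5 ≤ S.toList.length := by rwa [Finset.length_toList]
  set g : Fin 5 → Fin G.n × Bool :=
    (fun k => S.toList.get ⟨k.1, lt_of_lt_of_le k.2 hlen⟩) with hgdef
  have hginj : Function.Injective g := by
    intro k l hkl
    have hnd : Function.Injective S.toList.get :=
      List.nodup_iff_injective_get.mp S.nodup_toList
    have h2 := hnd hkl
    rw [Fin.mk.injEq] at h2
    exact Fin.ext h2
  have hgx : ∀ k, G.edge (g k).1 (bEnd (g k).2) = x := by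
    intro k
    have hm : g k ∈ S := Finset.mem_toList.mp (S.toList.get_mem _)
    exact (Finset.mem_filter.mp hm).2
  -- Step 2: the five marked points and an arc through them
  set p : Fin 5 → X := fun k => G.edge (g k).1 (bPt (g k).2) with hpdef
  obtain ⟨A, hA, hmemA⟩ := h p
  obtain ⟨e⟩ := hA
  set f : Set.Icc (0:ℝ) 1 → X := fun s => ((e.symm s : A) : X) with hfdef
  have hfcont : Continuous f := continuous_subtype_val.comp e.symm.continuous
  have hfinj : Function.Injective f := fun a b hab =>
    e.symm.injective (Subtype.ext hab)
  set F : ℝ → X := fun s => f (Set.projIcc 0 1 zero_le_one s) with hFdef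
  have hFcont : Continuous F := hfcont.comp continuous_projIcc
  have hFinj : ∀ s ∈ Set.Icc (0:ℝ) 1, ∀ s' ∈ Set.Icc (0:ℝ) 1, F s = F s' → s = s' := by
    intro s hs s' hs' hss
    rw [hFdef] at hss
    simp only at hss
    rw [Set.projIcc_of_mem zero_le_one hs, Set.projIcc_of_mem zero_le_one hs'] at hss
    exact congrArg Subtype.val (hfinj hss)
  set t : Fin 5 → ℝ := fun k => ((e ⟨p k, hmemA k⟩ : Set.Icc (0:ℝ) 1) : ℝ) with htdef
  have htmem : ∀ k, t k ∈ Set.Icc (0:ℝ) 1 := fun k => (e ⟨p k, hmemA k⟩).2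
  have hFt : ∀ k, F (t k) = p k := by
    intro k
    show f (Set.projIcc 0 1 zero_le_one (t k)) = p k
    rw [Set.projIcc_of_mem zero_le_one (htmem k)]
    have h1 : (⟨t k, htmem k⟩ : Set.Icc (0:ℝ) 1) = e ⟨p k, hmemA k⟩ := Subtype.ext rfl
    rw [h1]
    show ((e.symm (e ⟨p k, hmemA k⟩) : A) : X) = p k
    rw [e.symm_apply_apply]
  -- Step 3: legs
  set Lg : Fin 5 → Set X := fun k => leg G (g k).1 (g k).2 with hLgdef
  have hpLg : ∀ k, F (t k) ∈ Lg k := by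
    intro k
    rw [hFt k]
    exact ⟨_, bPt_mem_halfSet _, rfl⟩
  have hLgdisj : ∀ k l, k ≠ l → ∀ y, y ∈ Lg k → y ∈ Lg l → False := by
    intro k l hkl y h1 h2
    refine leg_disjoint G (i := (g k).1) (b := (g k).2) (j := (g l).1) (c := (g l).2)
      ?_ h1 h2
    intro hq
    exact hkl (hginj (by simpa using hq))
  -- Step 4: case analysis predicates
  set P1 : Fin 5 → Prop := fun k => F 0 ∈ Lg k with hP1
  set P2 : Fin 5 → Prop := fun k => F 1 ∈ Lg k with hP2
  set P3 : Fin 5 → Prop := fun k =>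
    ∃ s, 0 ≤ s ∧ s < t k ∧ F s = x ∧ ∀ u, s < u → u ≤ t k → F u ∈ Lg k with hP3
  set P4 : Fin 5 → Prop := fun k =>
    ∃ s, s ≤ 1 ∧ t k < s ∧ F s = x ∧ ∀ u, t k ≤ u → u < s → F u ∈ Lg k with hP4
  have hcases : ∀ k, P1 k ∨ P2 k ∨ P3 k ∨ P4 k := by
    intro k
    have hopen := leg_open G (g k).1 (g k).2
    by_cases hS0 : ∃ s, s ∈ Set.Icc 0 (t k) ∧ F s ∉ Lg k
    swap
    · push_neg at hS0
      exact Or.inl (hS0 0 ⟨le_refl 0, (htmem k).1⟩)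
    · set SS := {s : ℝ | s ∈ Set.Icc 0 (t k) ∧ F s ∉ Lg k} with hSSdef
      have hSclosed : IsClosed SS := by
        have : SS = Set.Icc 0 (t k) ∩ F ⁻¹' (Lg k)ᶜ := rfl
        rw [this]
        exact IsClosed.inter isClosed_Icc (IsClosed.preimage hFcont hopen.isClosed_compl)
      have hScpt : IsCompact SS :=
        IsCompact.of_isClosed_subset isCompact_Icc hSclosed (fun s hs => hs.1)
      have haS : sSup SS ∈ SS := hScpt.sSup_mem hS0
      set a := sSup SS with hadef
      have ha0 : 0 ≤ a := haS.1.1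
      have halt : a < t k := lt_of_le_of_ne haS.1.2 (fun hh => haS.2 (hh ▸ hpLg k))
      have hIoc : ∀ u, a < u → u ≤ t k → F u ∈ Lg k := by
        intro u h1 h2
        by_contra hu
        exact absurd (le_csSup hScpt.bddAbove (show u ∈ SS from ⟨⟨ha0.trans h1.le, h2⟩, hu⟩))
          (not_le.mpr h1)
      have hclos : F a ∈ closure (Lg k) := by
        have h1 : a ∈ closure (Set.Ioc a (t k)) := by
          rw [closure_Ioc (ne_of_lt halt)]
          exact ⟨le_refl a, halt.le⟩
        have h2 : F a ∈ closure (F '' Set.Ioc a (t k)) :=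
          image_closure_subset_closure_image hFcont ⟨a, h1, rfl⟩
        refine closure_mono ?_ h2
        rintro y ⟨u, hu, rfl⟩
        exact hIoc u hu.1 hu.2
      rcases leg_closure_cases G _ _ hclos with hin | hxe | hmd
      · exact absurd hin haS.2
      · refine Or.inr (Or.inr (Or.inl ⟨a, ha0, halt, ?_, hIoc⟩))
        rw [hxe]; exact hgx k
      · by_cases hT0 : ∃ s, s ∈ Set.Icc (t k) 1 ∧ F s ∉ Lg k
        swap
        · push_neg at hT0
          exact Or.inr (Or.inl (hT0 1 ⟨(htmem k).2, le_refl 1⟩))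
        · set TT := {s : ℝ | s ∈ Set.Icc (t k) 1 ∧ F s ∉ Lg k} with hTTdef
          have hTclosed : IsClosed TT := by
            have : TT = Set.Icc (t k) 1 ∩ F ⁻¹' (Lg k)ᶜ := rfl
            rw [this]
            exact IsClosed.inter isClosed_Icc (IsClosed.preimage hFcont hopen.isClosed_compl)
          have hTcpt : IsCompact TT :=
            IsCompact.of_isClosed_subset isCompact_Icc hTclosed (fun s hs => hs.1)
          have hcT : sInf TT ∈ TT := hTcpt.sInf_mem hT0
          set c := sInf TT with hcdef
          have hc1 : c ≤ 1 := hcT.1.2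
          have htc : t k < c := lt_of_le_of_ne hcT.1.1 (fun hh => hcT.2 (hh ▸ hpLg k))
          have hIco : ∀ u, t k ≤ u → u < c → F u ∈ Lg k := by
            intro u h1 h2
            by_contra hu
            exact absurd (csInf_le (hTcpt.bddBelow) (show u ∈ TT from ⟨⟨h1, h2.le.trans hc1⟩, hu⟩))
              (not_le.mpr h2)
          have hclos' : F c ∈ closure (Lg k) := by
            have h1 : c ∈ closure (Set.Ico (t k) c) := by
              rw [closure_Ico htc.ne]
              exact ⟨htc.le, le_refl c⟩
            have h2 : F c ∈ closure (F '' Set.Ico (t k) c) :=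
              image_closure_subset_closure_image hFcont ⟨c, h1, rfl⟩
            refine closure_mono ?_ h2
            rintro y ⟨u, hu, rfl⟩
            exact hIco u hu.1 hu.2
          rcases leg_closure_cases G _ _ hclos' with hin' | hxe' | hmd'
          · exact absurd hin' hcT.2
          · refine Or.inr (Or.inr (Or.inr ⟨c, hc1, htc, ?_, hIco⟩))
            rw [hxe']; exact hgx k
          · exfalso
            have hac : a = c := by
              refine hFinj a ⟨ha0, halt.le.trans (htmem k).2⟩ c
                ⟨(htmem k).1.trans hcT.1.1, hc1⟩ ?_
              rw [hmd, hmd']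
            rw [hac] at halt
            exact absurd halt (not_lt.mpr hcT.1.1)
  -- Step 5: each case can occur at most once; pigeonhole 5 > 4
  have hu1 : ∀ k l, P1 k → P1 l → k = l := by
    intro k l h1 h2
    by_contra hkl
    exact hLgdisj k l hkl _ h1 h2
  have hu2 : ∀ k l, P2 k → P2 l → k = l := by
    intro k l h1 h2
    by_contra hkl
    exact hLgdisj k l hkl _ h1 h2
  have hu3 : ∀ k l, P3 k → P3 l → k = l := by
    rintro k l ⟨s, hs0, hst, hsx, hsI⟩ ⟨s', hs0', hst', hsx', hsI'⟩
    by_contra hkl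
    have hss : s = s' :=
      hFinj s ⟨hs0, hst.le.trans (htmem k).2⟩ s' ⟨hs0', hst'.le.trans (htmem l).2⟩
        (by rw [hsx, hsx'])
    subst hss
    rcases le_total (t k) (t l) with hle | hle
    · exact hLgdisj k l hkl _ (hpLg k) (hsI' (t k) hst hle)
    · exact hLgdisj l k (Ne.symm hkl) _ (hpLg l) (hsI (t l) hst' hle)
  have hu4 : ∀ k l, P4 k → P4 l → k = l := by
    rintro k l ⟨s, hs1, hst, hsx, hsI⟩ ⟨s', hs1', hst', hsx', hsI'⟩
    by_contra hkl
    have hss : s = s' :=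
      hFinj s ⟨(htmem k).1.trans hst.le, hs1⟩ s' ⟨(htmem l).1.trans hst'.le, hs1'⟩
        (by rw [hsx, hsx'])
    subst hss
    rcases le_total (t k) (t l) with hle | hle
    · exact hLgdisj l k (Ne.symm hkl) _ (hpLg l) (hsI (t l) hle hst')
    · exact hLgdisj k l hkl _ (hpLg k) (hsI' (t k) hle hst)
  have hp4 : ∀ k, ¬P1 k → ¬P2 k → ¬P3 k → P4 k := fun k a b c =>
    (((hcases k).resolve_left a).resolve_left b).resolve_left c
  have hfinal : (5:ℕ) ≤ 4 := by
    have hinj : Function.Injective (fun k : Fin 5 =>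
        if P1 k then (0 : Fin 4) else if P2 k then 1 else if P3 k then 2 else 3) := by
      intro k l hkl
      simp only at hkl
      by_cases h1k : P1 k <;> by_cases h1l : P1 l <;>
        by_cases h2k : P2 k <;> by_cases h2l : P2 l <;>
        by_cases h3k : P3 k <;> by_cases h3l : P3 l <;>
        simp only [h1k, h1l, h2k, h2l, h3k, h3l, if_true, if_false] at hkl <;>
        first
          | exact hu1 k l h1k h1l
          | exact hu2 k l h2k h2l
          | exact hu3 k l h3k h3l
          | exact hu4 k l (hp4 k h1k h2k h3k) (hp4 l h1l h2l h3l)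
          | exact absurd hkl (by decide)
    simpa using Fintype.card_le_of_injective _ hinj
  exact absurd hfinal (by norm_num)
end

section
/- If a connected finite graph G has at least three branch points, then there is an arc α in G whose endpoints are branch points of G and whose interior contains exactly one branch point of G; thus α contains exactly three branch points of G. -/
open Set Topology

open Classical
namespace TGProof

lemma i0_ne_i1 : (i0 : Set.Icc (0:ℝ) 1) ≠ i1 := by
  intro h
  have := congrArg Subtype.val h
  norm_num [i0, i1] at this

variable {X : Type*} [TopologicalSpace X] (G : TopGraph X)

/-- vertices of the graph -/
def IsVertex (x : X) : Prop := ∃ i, G.edge i i0 = x ∨ G.edge i i1 = x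

lemma vertex_endpoint {i : Fin G.n} {x : X} (hx : x ∈ Set.range (G.edge i))
    (hv : IsVertex G x) : x = G.edge i i0 ∨ x = G.edge i i1 := by
  obtain ⟨j, hj⟩ := hv
  by_cases hij : j = i
  · subst hij
    rcases hj with h | h
    · exact Or.inl h.symm
    · exact Or.inr h.symm
  · have hxj : x ∈ Set.range (G.edge j) := by
      rcases hj with h | h
      · exact ⟨i0, h⟩
      · exact ⟨i1, h⟩
    exact (G.meet i j (fun h => hij h.symm) x ⟨hx, hxj⟩).1

lemma isVertex_of_branch {x : X} (hx : G.IsBranchPoint x) : IsVertex G x := by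
  by_contra h
  have h0 : G.degree x = 0 := by
    apply Finset.sum_eq_zero
    intro i _
    have h1 : ¬ (G.edge i i0 = x) := fun he => h ⟨i, Or.inl he⟩
    have h2 : ¬ (G.edge i i1 = x) := fun he => h ⟨i, Or.inr he⟩
    simp [h1, h2]
  rw [TopGraph.IsBranchPoint, h0] at hx
  omega

lemma degree_ge_three {x : X} {a b c : Fin G.n} (hab : a ≠ b) (hac : a ≠ c) (hbc : b ≠ c)
    (ha : G.edge a i0 = x ∨ G.edge a i1 = x) (hb : G.edge b i0 = x ∨ G.edge b i1 = x)
    (hc : G.edge c i0 = x ∨ G.edge c i1 = x) : G.IsBranchPoint x := by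
  have key : ∀ i ∈ ({a, b, c} : Finset (Fin G.n)),
      1 ≤ ((if G.edge i i0 = x then 1 else 0) + (if G.edge i i1 = x then 1 else 0)) := by
    intro i hi
    simp only [Finset.mem_insert, Finset.mem_singleton] at hi
    rcases hi with rfl | rfl | rfl
    · rcases ha with h | h <;> simp [h]
    · rcases hb with h | h <;> simp [h]
    · rcases hc with h | h <;> simp [h]
  have hcard : ({a, b, c} : Finset (Fin G.n)).card = 3 := by
    rw [Finset.card_insert_of_notMem (by simp [hab, hac]),
      Finset.card_insert_of_notMem (by simp [hbc]), Finset.card_singleton]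
  calc (3 : ℕ) = ∑ _i ∈ ({a, b, c} : Finset (Fin G.n)), 1 := by
        rw [Finset.sum_const, hcard]; ring
    _ ≤ ∑ i ∈ ({a, b, c} : Finset (Fin G.n)),
        ((if G.edge i i0 = x then 1 else 0) + (if G.edge i i1 = x then 1 else 0)) :=
        Finset.sum_le_sum key
    _ ≤ G.degree x := Finset.sum_le_sum_of_subset (Finset.subset_univ _)

/-- the incidence simple graph on `X` -/
def Γ : SimpleGraph X where
  Adj u v := u ≠ v ∧ ∃ i, (G.edge i i0 = u ∧ G.edge i i1 = v) ∨ (G.edge i i0 = v ∧ G.edge i i1 = u)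
  symm := by
    constructor
    rintro u v ⟨hne, i, h | h⟩
    · exact ⟨hne.symm, i, Or.inr h⟩
    · exact ⟨hne.symm, i, Or.inl h⟩
  loopless := by constructor; rintro u ⟨hne, -⟩; exact hne rfl

lemma adj_edge {u v : X} (h : (Γ G).Adj u v) :
    ∃ i, (G.edge i i0 = u ∧ G.edge i i1 = v) ∨ (G.edge i i0 = v ∧ G.edge i i1 = u) := h.2

lemma branch_of_three_neighbors {x u₁ u₂ u₃ : X} (h12 : u₁ ≠ u₂) (h13 : u₁ ≠ u₃) (h23 : u₂ ≠ u₃)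
    (a1 : (Γ G).Adj x u₁) (a2 : (Γ G).Adj x u₂) (a3 : (Γ G).Adj x u₃) :
    G.IsBranchPoint x := by
  obtain ⟨i₁, hi₁⟩ := adj_edge G a1
  obtain ⟨i₂, hi₂⟩ := adj_edge G a2
  obtain ⟨i₃, hi₃⟩ := adj_edge G a3
  have hxu1 := a1.1
  have hxu2 := a2.1
  have hxu3 := a3.1
  have key : ∀ (i : Fin G.n) (u u' : X), x ≠ u → x ≠ u' → u ≠ u' →
      ((G.edge i i0 = x ∧ G.edge i i1 = u) ∨ (G.edge i i0 = u ∧ G.edge i i1 = x)) →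
      ((G.edge i i0 = x ∧ G.edge i i1 = u') ∨ (G.edge i i0 = u' ∧ G.edge i i1 = x)) → False := by
    rintro i u u' hxu hxu' huu' (⟨p, q⟩ | ⟨p, q⟩) (⟨p', q'⟩ | ⟨p', q'⟩)
    · exact huu' (q.symm.trans q')
    · exact hxu (q.symm.trans q').symm
    · exact hxu (p.symm.trans p').symm
    · exact huu' (p.symm.trans p')
  have d12 : i₁ ≠ i₂ := fun h => key i₁ u₁ u₂ hxu1 hxu2 h12 hi₁ (h ▸ hi₂)
  have d13 : i₁ ≠ i₃ := fun h => key i₁ u₁ u₃ hxu1 hxu3 h13 hi₁ (h ▸ hi₃)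
  have d23 : i₂ ≠ i₃ := fun h => key i₂ u₂ u₃ hxu2 hxu3 h23 hi₂ (h ▸ hi₃)
  apply degree_ge_three G d12 d13 d23
  · rcases hi₁ with ⟨p, q⟩ | ⟨p, q⟩
    · exact Or.inl p
    · exact Or.inr q
  · rcases hi₂ with ⟨p, q⟩ | ⟨p, q⟩
    · exact Or.inl p
    · exact Or.inr q
  · rcases hi₃ with ⟨p, q⟩ | ⟨p, q⟩
    · exact Or.inl p
    · exact Or.inr q


section Conn
variable [T2Space X]

def erel (i j : Fin G.n) : Prop := (Set.range (G.edge i) ∩ Set.range (G.edge j)).Nonempty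

lemma range_closed (i : Fin G.n) : IsClosed (Set.range (G.edge i)) :=
  (isCompact_range (G.emb i).continuous).isClosed

lemma eqvGen_all [ConnectedSpace X] : ∀ i j, Relation.EqvGen (erel G) i j := by
  intro i j
  set U : Set X := ⋃ k : {k : Fin G.n // Relation.EqvGen (erel G) i k}, Set.range (G.edge k.1)
    with hU
  have hUc : IsClosed U := isClosed_iUnion_of_finite (fun k => range_closed G k.1)
  have hcompl : Uᶜ = ⋃ k : {k : Fin G.n // ¬ Relation.EqvGen (erel G) i k},
      Set.range (G.edge k.1) := by
    ext x
    constructor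
    · intro hx
      have hx2 : x ∈ ⋃ k, Set.range (G.edge k) := by rw [G.cover]; trivial
      obtain ⟨_, ⟨k, rfl⟩, hk⟩ := hx2
      by_cases h : Relation.EqvGen (erel G) i k
      · exact absurd (Set.mem_iUnion.2 ⟨⟨k, h⟩, hk⟩) hx
      · exact Set.mem_iUnion.2 ⟨⟨k, h⟩, hk⟩
    · intro hx hxU
      obtain ⟨_, ⟨⟨k, hk⟩, rfl⟩, hxk⟩ := hx
      obtain ⟨_, ⟨⟨l, hl⟩, rfl⟩, hxl⟩ := hxU
      exact hk (hl.trans _ _ _ (Relation.EqvGen.rel _ _ ⟨x, hxl, hxk⟩))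
  have hUo : IsOpen U := by
    rw [← isClosed_compl_iff, hcompl]
    exact isClosed_iUnion_of_finite (fun k => range_closed G k.1)
  have hUne : U.Nonempty := ⟨G.edge i i0, Set.mem_iUnion.2 ⟨⟨i, Relation.EqvGen.refl i⟩, ⟨i0, rfl⟩⟩⟩
  have hUuniv : U = Set.univ := by
    rcases (isClopen_iff.1 ⟨hUc, hUo⟩) with h | h
    · rw [h] at hUne; exact absurd hUne (by simp)
    · exact h
  have hx : G.edge j i0 ∈ U := by rw [hUuniv]; trivial
  obtain ⟨_, ⟨⟨k, hk⟩, rfl⟩, hxk⟩ := hx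
  exact hk.trans _ _ _ (Relation.EqvGen.rel _ _ ⟨G.edge j i0, hxk, ⟨i0, rfl⟩⟩)

lemma ends_reach {i : Fin G.n} {u v : X} (hu : G.edge i i0 = u ∨ G.edge i i1 = u)
    (hv : G.edge i i0 = v ∨ G.edge i i1 = v) : (Γ G).Reachable u v := by
  have base : (Γ G).Reachable (G.edge i i0) (G.edge i i1) := by
    by_cases h : G.edge i i0 = G.edge i i1
    · rw [h]
    · exact SimpleGraph.Adj.reachable ⟨h, i, Or.inl ⟨rfl, rfl⟩⟩
  rcases hu with rfl | rfl <;> rcases hv with rfl | rfl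
  · rfl
  · exact base
  · exact base.symm
  · rfl

lemma reach_of_eqvGen {i j : Fin G.n} (h : Relation.EqvGen (erel G) i j) :
    ∀ u v : X, (G.edge i i0 = u ∨ G.edge i i1 = u) → (G.edge j i0 = v ∨ G.edge j i1 = v) →
    (Γ G).Reachable u v := by
  induction h with
  | rel a b hr =>
    intro u v hu hv
    obtain ⟨x, hxa, hxb⟩ := hr
    by_cases hab : a = b
    · subst hab; exact ends_reach G hu hv
    · have hx := G.meet a b hab x ⟨hxa, hxb⟩
      have h1 : (Γ G).Reachable u x := ends_reach G hu (by tauto)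
      have h2 : (Γ G).Reachable x v := ends_reach G (by tauto) hv
      exact h1.trans h2
  | refl a => intro u v hu hv; exact ends_reach G hu hv
  | symm a b h ih => intro u v hu hv; exact (ih v u hv hu).symm
  | trans a b c h1 h2 ih1 ih2 =>
    intro u v hu hv
    exact (ih1 u (G.edge b i0) hu (Or.inl rfl)).trans (ih2 (G.edge b i0) v (Or.inl rfl) hv)

lemma vertex_reachable [ConnectedSpace X] {u v : X} (hu : IsVertex G u) (hv : IsVertex G v) :
    (Γ G).Reachable u v := by
  obtain ⟨i, hi⟩ := hu
  obtain ⟨j, hj⟩ := hv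
  exact reach_of_eqvGen G (eqvGen_all G i j) u v hi hj

end Conn

section Comb
open SimpleGraph Walk

variable {V : Type*} {Γ' : SimpleGraph V}

lemma first_exit (S : Set V) :
    ∀ {c a : V} (Q : Γ'.Walk c a), a ∈ S → c ∉ S → Q.IsPath →
    ∃ (w q : V) (hadj : Γ'.Adj q w) (Q'' : Γ'.Walk c q), w ∈ S ∧ (∀ x ∈ Q''.support, x ∉ S) ∧
      (Q''.concat hadj).IsPath ∧ ∀ x ∈ (Q''.concat hadj).support, x ∈ Q.support := by
  intro c a Q
  induction Q with
  | nil => intro ha hc _; exact absurd ha hc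
  | @cons c d a h Q₂ ih =>
    intro ha hc hp
    by_cases hd : d ∈ S
    · refine ⟨d, c, h, SimpleGraph.Walk.nil, hd, ?_, ?_, ?_⟩
      · intro x hx
        simp only [SimpleGraph.Walk.support_nil, List.mem_singleton] at hx
        subst hx; exact hc
      · rw [SimpleGraph.Walk.concat_nil]
        exact SimpleGraph.Walk.IsPath.cons SimpleGraph.Walk.IsPath.nil
          (by simp only [SimpleGraph.Walk.support_nil, List.mem_singleton]
              intro h'; exact hc (h' ▸ hd))
      · intro x hx
        rw [SimpleGraph.Walk.concat_nil] at hx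
        simp only [SimpleGraph.Walk.support_cons, SimpleGraph.Walk.support_nil,
          List.mem_cons, List.mem_singleton] at hx ⊢
        rcases hx with rfl | rfl | h'
        · exact Or.inl rfl
        · exact Or.inr (SimpleGraph.Walk.start_mem_support Q₂)
        · exact absurd h' (by simp)
    · obtain ⟨w, q, hadj, Q'', hw, havoid, hpath, hsub⟩ := ih ha hd hp.of_cons
      have hcQ₂ : c ∉ Q₂.support := ((SimpleGraph.Walk.cons_isPath_iff h Q₂).1 hp).2
      refine ⟨w, q, hadj, SimpleGraph.Walk.cons h Q'', hw, ?_, ?_, ?_⟩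
      · intro x hx
        rw [SimpleGraph.Walk.support_cons, List.mem_cons] at hx
        rcases hx with rfl | hx
        · exact hc
        · exact havoid x hx
      · rw [SimpleGraph.Walk.concat_cons]
        exact SimpleGraph.Walk.IsPath.cons hpath (fun hcx => hcQ₂ (hsub c hcx))
      · intro x hx
        rw [SimpleGraph.Walk.concat_cons, SimpleGraph.Walk.support_cons, List.mem_cons] at hx
        rw [SimpleGraph.Walk.support_cons, List.mem_cons]
        rcases hx with rfl | hx
        · exact Or.inl rfl
        · exact Or.inr (hsub x hx)

/-- an interior vertex of a path has two distinct neighbours on the path,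
none of which is outside the support -/
lemma interior_two_neighbors :
    ∀ {a b : V} (P : Γ'.Walk a b), P.IsPath → ∀ w ∈ P.support, w ≠ a → w ≠ b →
    ∃ u₁ u₂, u₁ ≠ u₂ ∧ Γ'.Adj w u₁ ∧ Γ'.Adj w u₂ ∧ u₁ ∈ P.support ∧ u₂ ∈ P.support := by
  intro a b P
  induction P with
  | nil =>
    intro _ w hw hwa _
    simp only [SimpleGraph.Walk.support_nil, List.mem_singleton] at hw
    exact absurd hw hwa
  | @cons a d b h P₂ ih =>
    intro hp w hw hwa hwb
    rw [SimpleGraph.Walk.support_cons, List.mem_cons] at hw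
    rcases hw with rfl | hw
    · exact absurd rfl hwa
    · by_cases hwd : w = d
      · subst hwd
        -- w = d : neighbours are a and the next vertex of P₂
        cases P₂ with
        | nil => exact absurd rfl hwb
        | @cons d e b h₂ P₃ =>
          refine ⟨a, e, ?_, h.symm, h₂, by simp, by simp⟩
          intro hae
          have : a ∈ (SimpleGraph.Walk.cons h₂ P₃).support := by
            rw [hae, SimpleGraph.Walk.support_cons]
            exact List.mem_cons_of_mem _ (SimpleGraph.Walk.start_mem_support P₃)
          exact ((SimpleGraph.Walk.cons_isPath_iff h _).1 hp).2 this
      · obtain ⟨u₁, u₂, hne, ha1, ha2, hm1, hm2⟩ := ih hp.of_cons w hw hwd hwb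
        exact ⟨u₁, u₂, hne, ha1, ha2,
          List.mem_cons_of_mem _ hm1, List.mem_cons_of_mem _ hm2⟩

lemma append_isPath {x y z : V} {p : Γ'.Walk x y} {r : Γ'.Walk y z} (hp : p.IsPath)
    (hr : r.IsPath) (hint : ∀ v, v ∈ p.support → v ∈ r.support → v = y) :
    (p.append r).IsPath := by
  rw [SimpleGraph.Walk.isPath_def, SimpleGraph.Walk.support_append]
  have hrt := SimpleGraph.Walk.support_eq_cons r
  have h2 : (y :: r.support.tail).Nodup := hrt ▸ hr.support_nodup
  rw [List.nodup_cons] at h2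
  refine List.Nodup.append hp.support_nodup h2.2 ?_
  intro v hv1 hv2
  have hv3 : v ∈ r.support := hrt ▸ List.mem_cons_of_mem _ hv2
  have := hint v hv1 hv3
  subst this
  exact h2.1 hv2

/-- Step 1: there is a path between branch vertices with a branch vertex in its interior. -/
lemma exists_path_with_interior (B : Set V)
    (hdeg : ∀ w u₁ u₂ u₃ : V, u₁ ≠ u₂ → u₁ ≠ u₃ → u₂ ≠ u₃ →
      Γ'.Adj w u₁ → Γ'.Adj w u₂ → Γ'.Adj w u₃ → w ∈ B)
    {a b c : V} (ha : a ∈ B) (hb : b ∈ B) (hc : c ∈ B)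
    (hab : a ≠ b) (hac : a ≠ c) (hbc : b ≠ c)
    (hrab : Γ'.Reachable a b) (hrca : Γ'.Reachable c a) :
    ∃ (x y : V) (R : Γ'.Walk x y), R.IsPath ∧ x ∈ B ∧ y ∈ B ∧
      ∃ z ∈ B, z ∈ R.support ∧ z ≠ x ∧ z ≠ y := by
  obtain ⟨W⟩ := hrab
  obtain ⟨W'⟩ := hrca
  set P := W.bypass with hPdef
  have hP : P.IsPath := W.bypass_isPath
  by_cases hcP : c ∈ P.support
  · exact ⟨a, b, P, hP, ha, hb, c, hc, hcP, fun h => hac h.symm, fun h => hbc h.symm⟩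
  · set Q := W'.bypass with hQdef
    have hQ : Q.IsPath := W'.bypass_isPath
    obtain ⟨w, q, hadj, Q'', hw, havoid, hpath, hsub⟩ :=
      first_exit {x | x ∈ P.support} Q (SimpleGraph.Walk.start_mem_support P) hcP hQ
    set Q' := Q''.concat hadj with hQ'def
    have hq : q ∉ P.support := havoid q (SimpleGraph.Walk.end_mem_support Q'')
    have hQ'supp : ∀ v, v ∈ Q'.support → v ∈ P.support → v = w := by
      intro v hv hvP
      rw [hQ'def, SimpleGraph.Walk.support_concat,
        List.mem_append, List.mem_singleton] at hv
      rcases hv with hv | rfl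
      · exact absurd hvP (havoid v hv)
      · rfl
    by_cases hwa : w = a
    · -- the path from b to c through a
      subst hwa
      have hR : (P.reverse.append Q'.reverse).IsPath := by
        apply append_isPath hP.reverse hpath.reverse
        intro v hv1 hv2
        rw [SimpleGraph.Walk.support_reverse, List.mem_reverse] at hv1 hv2
        exact hQ'supp v hv2 hv1
      refine ⟨b, c, _, hR, hb, hc, w, ha, ?_, hab, hac⟩
      apply SimpleGraph.Walk.subset_support_append_left
      rw [SimpleGraph.Walk.support_reverse, List.mem_reverse]
      exact SimpleGraph.Walk.start_mem_support P
    · by_cases hwb : w = b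
      · subst hwb
        have hR : (P.append Q'.reverse).IsPath := by
          apply append_isPath hP hpath.reverse
          intro v hv1 hv2
          rw [SimpleGraph.Walk.support_reverse, List.mem_reverse] at hv2
          exact hQ'supp v hv2 hv1
        refine ⟨a, c, _, hR, ha, hc, w, hb, ?_, fun h => hab h.symm, hbc⟩
        apply SimpleGraph.Walk.subset_support_append_left
        exact SimpleGraph.Walk.end_mem_support P
      · -- w is interior to P, hence has three neighbours, hence is in B
        obtain ⟨u₁, u₂, hne, ha1, ha2, hm1, hm2⟩ :=
          interior_two_neighbors P hP w hw hwa hwb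
        have hqu₁ : q ≠ u₁ := fun h => hq (h ▸ hm1)
        have hqu₂ : q ≠ u₂ := fun h => hq (h ▸ hm2)
        have hwB : w ∈ B := hdeg w u₁ u₂ q hne hqu₁.symm hqu₂.symm ha1 ha2 hadj.symm
        exact ⟨a, b, P, hP, ha, hb, w, hwB, hw, hwa, hwb⟩

/-- Step 2: refine to a path with exactly one interior branch vertex. -/
lemma refine_path (B : Set V) :
    ∀ n : ℕ, ∀ {x y : V} (R : Γ'.Walk x y), R.length = n → R.IsPath → x ∈ B → y ∈ B →
    (∃ z ∈ B, z ∈ R.support ∧ z ≠ x ∧ z ≠ y) →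
    ∃ (x' y' : V) (R' : Γ'.Walk x' y'), R'.IsPath ∧ x' ∈ B ∧ y' ∈ B ∧
      ∃ z' ∈ B, z' ∈ R'.support ∧ z' ≠ x' ∧ z' ≠ y' ∧ x' ≠ y' ∧
        ∀ v ∈ R'.support, v ∈ B → v = x' ∨ v = y' ∨ v = z' := by
  intro n
  induction n using Nat.strong_induction_on with
  | _ n ih =>
    intro x y R hlen hR hx hy hz
    obtain ⟨z, hzB, hzsup, hzx, hzy⟩ := hz
    set R₁ := R.takeUntil z hzsup with hR₁def
    set R₂ := R.dropUntil z hzsup with hR₂def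
    have hspec : R₁.append R₂ = R := R.take_spec hzsup
    have hlen12 : R₁.length + R₂.length = n := by
      rw [← hlen, ← hspec, SimpleGraph.Walk.length_append]
    have hR₁p : R₁.IsPath := hR.takeUntil hzsup
    have hR₂p : R₂.IsPath := hR.dropUntil hzsup
    have hlen₂pos : 0 < R₂.length := by
      rcases Nat.eq_zero_or_pos R₂.length with h | h
      · exact absurd (SimpleGraph.Walk.eq_of_length_eq_zero h) hzy
      · exact h
    have hlen₁pos : 0 < R₁.length := by
      rcases Nat.eq_zero_or_pos R₁.length with h | h
      · exact absurd (SimpleGraph.Walk.eq_of_length_eq_zero h) (fun h' => hzx h'.symm)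
      · exact h
    by_cases hA : ∃ z₁ ∈ B, z₁ ∈ R₁.support ∧ z₁ ≠ x ∧ z₁ ≠ z
    · exact ih R₁.length (by omega) R₁ rfl hR₁p hx hzB hA
    · by_cases hB2 : ∃ z₂ ∈ B, z₂ ∈ R₂.support ∧ z₂ ≠ z ∧ z₂ ≠ y
      · exact ih R₂.length (by omega) R₂ rfl hR₂p hzB hy hB2
      · push_neg at hA hB2
        refine ⟨x, y, R, hR, hx, hy, z, hzB, hzsup, hzx, hzy, ?_, ?_⟩
        · intro hxy
          subst hxy
          have := SimpleGraph.Walk.isPath_iff_eq_nil.1 hR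
          subst this
          simp only [SimpleGraph.Walk.support_nil, List.mem_singleton] at hzsup
          exact hzx hzsup
        · intro v hv hvB
          rw [← hspec, SimpleGraph.Walk.mem_support_append_iff] at hv
          rcases hv with hv | hv
          · rcases eq_or_ne v x with h | h
            · exact Or.inl h
            · exact Or.inr (Or.inr (hA v hvB hv h))
          · rcases eq_or_ne v z with h | h
            · exact Or.inr (Or.inr h)
            · exact Or.inr (Or.inl (hB2 v hvB hv h))

end Comb

section Topo
variable [T2Space X]

lemma i0_coe : ((i0 : Set.Icc (0:ℝ) 1) : ℝ) = 0 := rfl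
lemma i1_coe : ((i1 : Set.Icc (0:ℝ) 1) : ℝ) = 1 := rfl

/-- the reversal homeomorphism of the unit interval -/
noncomputable def rev : Set.Icc (0:ℝ) 1 ≃ₜ Set.Icc (0:ℝ) 1 := unitInterval.symmHomeomorph

lemma rev_i0 : rev i0 = i1 := by
  apply Subtype.ext
  show (1 : ℝ) - 0 = 1
  norm_num

lemma rev_i1 : rev i1 = i0 := by
  apply Subtype.ext
  show (1 : ℝ) - 1 = 0
  norm_num

lemma zero_eq_i0 : (0 : unitInterval) = i0 := Subtype.ext rfl
lemma one_eq_i1 : (1 : unitInterval) = i1 := Subtype.ext rfl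

omit [T2Space X] in
/-- orient an edge from u to v -/
lemma oriented_edge {u v : X} {j : Fin G.n}
    (hj : (G.edge j i0 = u ∧ G.edge j i1 = v) ∨ (G.edge j i0 = v ∧ G.edge j i1 = u)) :
    ∃ β : Set.Icc (0:ℝ) 1 → X, Topology.IsEmbedding β ∧ β i0 = u ∧ β i1 = v ∧
      Set.range β = Set.range (G.edge j) := by
  rcases hj with ⟨h0, h1⟩ | ⟨h0, h1⟩
  · exact ⟨G.edge j, G.emb j, h0, h1, rfl⟩
  · refine ⟨G.edge j ∘ rev, (G.emb j).comp rev.isEmbedding, ?_, ?_, ?_⟩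
    · show G.edge j (rev i0) = u
      rw [rev_i0]; exact h1
    · show G.edge j (rev i1) = v
      rw [rev_i1]; exact h0
    · rw [Set.range_comp, Set.range_eq_univ.2 rev.surjective, Set.image_univ]

/-- concatenation of two embeddings of the unit interval meeting at one endpoint -/
lemma concat_emb {f g : Set.Icc (0:ℝ) 1 → X} (hf : Topology.IsEmbedding f)
    (hg : Topology.IsEmbedding g) (hfg : f i1 = g i0)
    (hmeet : ∀ p, p ∈ Set.range f → p ∈ Set.range g → p = f i1) :
    ∃ h : Set.Icc (0:ℝ) 1 → X, Topology.IsEmbedding h ∧ h i0 = f i0 ∧ h i1 = g i1 ∧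
      Set.range h = Set.range f ∪ Set.range g := by
  let γ₁ : Path (f i0) (f i1) := ⟨⟨f, hf.continuous⟩, by rw [zero_eq_i0], by rw [one_eq_i1]⟩
  let γ₂ : Path (g i0) (g i1) := ⟨⟨g, hg.continuous⟩, by rw [zero_eq_i0], by rw [one_eq_i1]⟩
  let γ₂' : Path (f i1) (g i1) := γ₂.cast hfg rfl
  have hγ₁ : ⇑γ₁ = f := rfl
  have hγ₂' : ⇑γ₂' = g := by
    show ⇑(γ₂.cast hfg rfl) = g
    rw [Path.cast_coe]; rfl
  let h := γ₁.trans γ₂'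
  have hcont : Continuous ⇑h := h.continuous
  have hinj : Function.Injective ⇑h := by
    intro s t heq
    rw [Path.trans_apply, Path.trans_apply] at heq
    split_ifs at heq with h1 h2 h2
    · rw [hγ₁] at heq
      have := hf.injective heq
      have h3 : 2 * (s : ℝ) = 2 * (t : ℝ) := congrArg Subtype.val this
      apply Subtype.ext; linarith
    · -- s ≤ 1/2 < t : f val = g val
      rw [hγ₁, hγ₂'] at heq
      have hmem : f ⟨2 * s, _⟩ = f i1 :=
        hmeet _ ⟨_, rfl⟩ ⟨_, heq.symm⟩
      have h3 : (⟨2 * (s:ℝ), _⟩ : Set.Icc (0:ℝ) 1) = i1 := hf.injective hmem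
      have h4 : 2 * (s : ℝ) = 1 := congrArg Subtype.val h3
      have hg0 := heq.symm.trans (hmem.trans hfg)
      have h5 := hg.injective hg0
      have h6 : 2 * (t : ℝ) - 1 = 0 := congrArg Subtype.val h5
      push_neg at h2
      exfalso; linarith
    · rw [hγ₁, hγ₂'] at heq
      have hmem : f ⟨2 * t, _⟩ = f i1 :=
        hmeet _ ⟨_, rfl⟩ ⟨_, heq⟩
      have h3 : (⟨2 * (t:ℝ), _⟩ : Set.Icc (0:ℝ) 1) = i1 := hf.injective hmem
      have h4 : 2 * (t : ℝ) = 1 := congrArg Subtype.val h3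
      have hg0 := heq.trans (hmem.trans hfg)
      have h5 := hg.injective hg0
      have h6 : 2 * (s : ℝ) - 1 = 0 := congrArg Subtype.val h5
      push_neg at h1
      exfalso; linarith
    · rw [hγ₂'] at heq
      have := hg.injective heq
      have h3 : 2 * (s : ℝ) - 1 = 2 * (t : ℝ) - 1 := congrArg Subtype.val this
      apply Subtype.ext; linarith
  refine ⟨⇑h, (hcont.isClosedEmbedding hinj).toIsEmbedding, ?_, ?_, ?_⟩
  · exact (congrArg (⇑h) zero_eq_i0).symm.trans h.source
  · exact (congrArg (⇑h) one_eq_i1).symm.trans h.target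
  · rw [Path.trans_range, hγ₁, hγ₂']

end Topo

section Realize
variable [T2Space X]

lemma mem_cons_support {x y z : X} (h : (Γ G).Adj x y) (Q : (Γ G).Walk y z) {v : X}
    (hv : v ∈ Q.support) : v ∈ (SimpleGraph.Walk.cons h Q).support := by
  rw [SimpleGraph.Walk.support_cons]
  exact List.mem_cons_of_mem _ hv

/-- realize a combinatorial simple path as a topological arc -/
lemma realize : ∀ {x y : X} (P : (Γ G).Walk x y), P.IsPath → x ≠ y →
    ∃ α : Set.Icc (0:ℝ) 1 → X, Topology.IsEmbedding α ∧ α i0 = x ∧ α i1 = y ∧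
      (∀ v ∈ P.support, v ∈ Set.range α) ∧
      ∃ s : Finset (Fin G.n), Set.range α = ⋃ i ∈ s, Set.range (G.edge i) ∧
        ∀ i ∈ s, G.edge i i0 ∈ P.support ∧ G.edge i i1 ∈ P.support := by
  intro x y P
  induction P with
  | nil => intro _ hxy; exact absurd rfl hxy
  | @cons x d y h P₂ ih =>
    intro hP hxy
    cases P₂ with
    | nil =>
      obtain ⟨j, hj⟩ := h.2
      obtain ⟨β, hβ, hβ0, hβ1, hβr⟩ := oriented_edge G hj
      refine ⟨β, hβ, hβ0, hβ1, ?_, {j}, ?_, ?_⟩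
      · intro v hv
        simp only [SimpleGraph.Walk.support_cons, SimpleGraph.Walk.support_nil,
          List.mem_cons, List.mem_singleton] at hv
        rcases hv with rfl | rfl | hfalse
        · exact ⟨i0, hβ0⟩
        · exact ⟨i1, hβ1⟩
        · exact absurd hfalse (by simp)
      · simp [hβr]
      · intro i hi
        simp only [Finset.mem_singleton] at hi
        subst hi
        simp only [SimpleGraph.Walk.support_cons, SimpleGraph.Walk.support_nil,
          List.mem_cons, List.mem_singleton]
        rcases hj with ⟨h0, h1⟩ | ⟨h0, h1⟩
        · exact ⟨Or.inl h0, Or.inr (Or.inl h1)⟩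
        · exact ⟨Or.inr (Or.inl h0), Or.inl h1⟩
    | @cons d e y h₂ P₃ =>
      set Q : (Γ G).Walk d y := SimpleGraph.Walk.cons h₂ P₃ with hQdef
      have hP₂ : Q.IsPath := hP.of_cons
      have hxP₂ : x ∉ Q.support := ((SimpleGraph.Walk.cons_isPath_iff h Q).1 hP).2
      have hdy : d ≠ y := by
        intro hdy
        have h1 : d ∉ P₃.support := ((SimpleGraph.Walk.cons_isPath_iff h₂ P₃).1 hP₂).2
        have h2 : y ∈ P₃.support := SimpleGraph.Walk.end_mem_support P₃
        exact h1 (hdy ▸ h2)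
      obtain ⟨α₂, hα₂, hα₂0, hα₂1, hsupp₂, s₂, hrange₂, hends₂⟩ := ih hP₂ hdy
      obtain ⟨j, hj⟩ := h.2
      obtain ⟨β, hβ, hβ0, hβ1, hβr⟩ := oriented_edge G hj
      have hxvert : IsVertex G x := by
        rcases hj with ⟨h0, _⟩ | ⟨_, h1⟩
        · exact ⟨j, Or.inl h0⟩
        · exact ⟨j, Or.inr h1⟩
      have hxnot : x ∉ Set.range α₂ := by
        intro hx
        rw [hrange₂] at hx
        obtain ⟨i, his, hxi⟩ : ∃ i ∈ s₂, x ∈ Set.range (G.edge i) := by simpa using hx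
        rcases vertex_endpoint G hxi hxvert with he | he
        · exact hxP₂ (by rw [he]; exact (hends₂ i his).1)
        · exact hxP₂ (by rw [he]; exact (hends₂ i his).2)
      have hd1 : β i1 = α₂ i0 := by rw [hβ1, hα₂0]
      have hmeet' : ∀ p, p ∈ Set.range β → p ∈ Set.range α₂ → p = β i1 := by
        intro p hpβ hpα
        have hpα' := hpα
        rw [hβr] at hpβ
        rw [hrange₂] at hpα
        obtain ⟨i, his, hpi⟩ : ∃ i ∈ s₂, p ∈ Set.range (G.edge i) := by simpa using hpα
        have hij : i ≠ j := by
          rintro rfl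
          rcases hj with ⟨h0, _⟩ | ⟨_, h1⟩
          · exact hxP₂ (h0 ▸ (hends₂ i his).1)
          · exact hxP₂ (h1 ▸ (hends₂ i his).2)
        have hpe := (G.meet j i (fun hh => hij hh.symm) p ⟨hpβ, hpi⟩).1
        rw [hβ1]
        rcases hpe with hp | hp
        · rcases hj with ⟨h0, h1⟩ | ⟨h0, h1⟩
          · exact absurd ((hp.trans h0) ▸ hpα') hxnot
          · exact hp.trans h0
        · rcases hj with ⟨h0, h1⟩ | ⟨h0, h1⟩
          · exact hp.trans h1
          · exact absurd ((hp.trans h1) ▸ hpα') hxnot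
      obtain ⟨α, hα, hα0, hα1, hαr⟩ := concat_emb hβ hα₂ hd1 hmeet'
      refine ⟨α, hα, by rw [hα0, hβ0], by rw [hα1, hα₂1], ?_, insert j s₂, ?_, ?_⟩
      · intro v hv
        rw [SimpleGraph.Walk.support_cons, List.mem_cons] at hv
        rcases hv with rfl | hv
        · exact ⟨i0, by rw [hα0, hβ0]⟩
        · rw [hαr]
          exact Set.mem_union_right _ (hsupp₂ v hv)
      · rw [hαr, hβr, Finset.set_biUnion_insert, hrange₂]
      · intro i hi
        rcases Finset.mem_insert.1 hi with rfl | his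
        · have hdQ : d ∈ (SimpleGraph.Walk.cons h Q).support :=
            mem_cons_support G h Q (SimpleGraph.Walk.start_mem_support Q)
          have hxQ : x ∈ (SimpleGraph.Walk.cons h Q).support :=
            SimpleGraph.Walk.start_mem_support _
          rcases hj with ⟨h0, h1⟩ | ⟨h0, h1⟩
          · exact ⟨h0 ▸ hxQ, h1 ▸ hdQ⟩
          · exact ⟨h0 ▸ hdQ, h1 ▸ hxQ⟩
        · exact ⟨mem_cons_support G h Q (hends₂ i his).1,
            mem_cons_support G h Q (hends₂ i his).2⟩

end Realize

end TGProof

open TGProof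

/-- A connected finite graph with at least three branch points contains an arc whose
endpoints are branch points and whose interior contains exactly one branch point;
thus the arc contains exactly three branch points. -/
theorem arc_with_three_branch_points {X : Type*} [TopologicalSpace X] [T2Space X]
    [ConnectedSpace X] (G : TopGraph X)
    (h3 : ∃ x y z : X, x ≠ y ∧ x ≠ z ∧ y ≠ z ∧
      G.IsBranchPoint x ∧ G.IsBranchPoint y ∧ G.IsBranchPoint z) :
    ∃ α : Set.Icc (0:ℝ) 1 → X, Topology.IsEmbedding α ∧
      G.IsBranchPoint (α i0) ∧ G.IsBranchPoint (α i1) ∧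
      (∃! z, z ∈ α '' {s | s ≠ i0 ∧ s ≠ i1} ∧ G.IsBranchPoint z) ∧
      (Set.range α ∩ {x | G.IsBranchPoint x}).ncard = 3 := by
  obtain ⟨a, b, c, hab, hac, hbc, hBa, hBb, hBc⟩ := h3
  set B : Set X := {x | G.IsBranchPoint x} with hBdef
  have hdeg : ∀ w u₁ u₂ u₃ : X, u₁ ≠ u₂ → u₁ ≠ u₃ → u₂ ≠ u₃ →
      (Γ G).Adj w u₁ → (Γ G).Adj w u₂ → (Γ G).Adj w u₃ → w ∈ B :=
    fun w u₁ u₂ u₃ h12 h13 h23 a1 a2 a3 =>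
      branch_of_three_neighbors G h12 h13 h23 a1 a2 a3
  have hrab : (Γ G).Reachable a b :=
    vertex_reachable G (isVertex_of_branch G hBa) (isVertex_of_branch G hBb)
  have hrca : (Γ G).Reachable c a :=
    vertex_reachable G (isVertex_of_branch G hBc) (isVertex_of_branch G hBa)
  obtain ⟨x, y, R, hR, hx, hy, hz⟩ :=
    exists_path_with_interior B hdeg hBa hBb hBc hab hac hbc hrab hrca
  obtain ⟨x', y', R', hR', hx', hy', z', hz'B, hz'sup, hz'x, hz'y, hxy', huniq⟩ :=
    refine_path B R.length R rfl hR hx hy hz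
  obtain ⟨α, hα, hα0, hα1, hsupp, s, hrange, hends⟩ := realize G R' hR' hxy'
  have key1 : ∀ v, v ∈ Set.range α → G.IsBranchPoint v → v ∈ R'.support := by
    intro v hv hbv
    rw [hrange] at hv
    obtain ⟨i, his, hvi⟩ : ∃ i ∈ s, v ∈ Set.range (G.edge i) := by simpa using hv
    rcases vertex_endpoint G hvi (isVertex_of_branch G hbv) with he | he
    · rw [he]; exact (hends i his).1
    · rw [he]; exact (hends i his).2
  have key2 : Set.range α ∩ B = {x', y', z'} := by
    ext v
    constructor
    · rintro ⟨hv1, hv2⟩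
      have hvsup := key1 v hv1 hv2
      rcases huniq v hvsup hv2 with rfl | rfl | rfl
      · exact Or.inl rfl
      · exact Or.inr (Or.inl rfl)
      · exact Or.inr (Or.inr rfl)
    · rintro (rfl | rfl | rfl)
      · exact ⟨⟨i0, hα0⟩, hx'⟩
      · exact ⟨⟨i1, hα1⟩, hy'⟩
      · exact ⟨hsupp _ hz'sup, hz'B⟩
  refine ⟨α, hα, ?_, ?_, ?_, ?_⟩
  · rw [hα0]; exact hx'
  · rw [hα1]; exact hy'
  · obtain ⟨t, ht⟩ := hsupp z' hz'sup
    have ht0 : t ≠ i0 := by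
      rintro rfl
      exact hz'x (ht.symm.trans hα0)
    have ht1 : t ≠ i1 := by
      rintro rfl
      exact hz'y (ht.symm.trans hα1)
    refine ⟨z', ⟨⟨t, ⟨ht0, ht1⟩, ht⟩, hz'B⟩, ?_⟩
    rintro w ⟨⟨u, ⟨hu0, hu1⟩, huw⟩, hbw⟩
    have hwmem : w ∈ Set.range α ∩ B := ⟨⟨u, huw⟩, hbw⟩
    rw [key2] at hwmem
    rcases hwmem with rfl | rfl | rfl
    · exact absurd (hα.injective (huw.trans hα0.symm)) hu0
    · exact absurd (hα.injective (huw.trans hα1.symm)) hu1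
    · rfl
  · rw [key2]
    rw [Set.ncard_eq_three]
    exact ⟨x', y', z', hxy', fun h => hz'x h.symm, fun h => hz'y h.symm, rfl⟩
end
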